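/- arXiv:2011.03917 — 4 statements merged into one kernel-verified Lean document; each statement's English description precedes it below -/
import Mathlib

section
/- Under the Thompson sampling property, for any subset B of the countable action set, the empirical frequency N_{B,T}/T = (1/T) ∑_{t=1}^T 1_{B}(A_t) converges almost surely as T → ∞ to P(A*(θ*) ∈ B | H_∞). -/
open MeasureTheory Filter Topology
open scoped ENNReal NNReal

/-- Kronecker-type lemma: if `∑ (t+1)⁻¹ d t` converges, then the Cesàro averages of `d` tend
to `0`. -/
lemma kronecker_aux {d : ℕ → ℝ} {c : ℝ}
    (h : Tendsto (fun n : ℕ => ∑ t ∈ Finset.range n, ((t : ℝ) + 1)⁻¹ * d t) atTop (𝓝 c)) :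
    Tendsto (fun n : ℕ => (n : ℝ)⁻¹ * ∑ t ∈ Finset.range n, d t) atTop (𝓝 0) := by
  set s : ℕ → ℝ := fun n => ∑ t ∈ Finset.range n, ((t : ℝ) + 1)⁻¹ * d t with hs
  have hd : ∀ t : ℕ, d t = ((t : ℝ) + 1) * (s (t + 1) - s t) := by
    intro t
    have h1 : s (t + 1) - s t = ((t : ℝ) + 1)⁻¹ * d t := by
      simp [hs, Finset.sum_range_succ]
    rw [h1, ← mul_assoc, mul_inv_cancel₀ (by positivity), one_mul]
  have hsum : ∀ n : ℕ, ∑ t ∈ Finset.range n, d t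
      = (n : ℝ) * s n - ∑ t ∈ Finset.range n, s t := by
    intro n
    calc ∑ t ∈ Finset.range n, d t
        = ∑ t ∈ Finset.range n,
          (((((t : ℕ) + 1 : ℕ) : ℝ) * s (t + 1) - (t : ℝ) * s t) - s t) := by
          refine Finset.sum_congr rfl fun t _ => ?_
          rw [hd t]; push_cast; ring
      _ = (∑ t ∈ Finset.range n,
            ((((t : ℕ) + 1 : ℕ) : ℝ) * s (t + 1) - (t : ℝ) * s t))
          - ∑ t ∈ Finset.range n, s t := by rw [Finset.sum_sub_distrib]
      _ = (n : ℝ) * s n - ∑ t ∈ Finset.range n, s t := by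
          rw [Finset.sum_range_sub (fun t : ℕ => (t : ℝ) * s t)]
          simp
  have hces : Tendsto (fun n : ℕ => (n : ℝ)⁻¹ * ∑ t ∈ Finset.range n, s t) atTop (𝓝 c) :=
    h.cesaro
  have hmain : Tendsto (fun n : ℕ => s n - (n : ℝ)⁻¹ * ∑ t ∈ Finset.range n, s t)
      atTop (𝓝 (c - c)) := h.sub hces
  rw [sub_self] at hmain
  refine hmain.congr' ?_
  filter_upwards [eventually_ne_atTop 0] with n hn
  have hn' : (n : ℝ) ≠ 0 := Nat.cast_ne_zero.2 hn
  rw [hsum n, mul_sub, ← mul_assoc, inv_mul_cancel₀ hn', one_mul]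

/-- Strong law for martingale differences with uniformly bounded summands: if `X t` is
`ℋ (t+1)`-measurable and bounded by `1`, then the Cesàro averages of the centered variables
`X t - 𝔼[X t | ℋ t]` tend to `0` almost surely. -/
lemma mg_slln {Ω : Type*} {m0 : MeasurableSpace Ω} {μ : Measure Ω} [IsProbabilityMeasure μ]
    (ℋ : Filtration ℕ m0) (X : ℕ → Ω → ℝ)
    (hXm : ∀ t, StronglyMeasurable[ℋ (t + 1)] (X t))
    (hXb : ∀ t ω, |X t ω| ≤ 1) :
    ∀ᵐ ω ∂μ, Tendsto
      (fun T : ℕ => (T : ℝ)⁻¹ * ∑ t ∈ Finset.range T, (X t ω - (μ[X t|ℋ t]) ω))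
      atTop (𝓝 0) := by
  classical
  have hXm0 : ∀ t, StronglyMeasurable (X t) := fun t => (hXm t).mono (ℋ.le _)
  have hXint : ∀ t, Integrable (X t) μ := fun t =>
    (integrable_const (1 : ℝ)).mono' (hXm0 t).aestronglyMeasurable
      (ae_of_all _ fun ω => by simpa [Real.norm_eq_abs] using hXb t ω)
  set D : ℕ → Ω → ℝ := fun t ω => X t ω - (μ[X t|ℋ t]) ω with hD
  have hDm : ∀ t, StronglyMeasurable[ℋ (t + 1)] (D t) := fun t =>
    (hXm t).sub (stronglyMeasurable_condExp.mono (ℋ.mono t.le_succ))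
  have hDint : ∀ t, Integrable (D t) μ := fun t => (hXint t).sub integrable_condExp
  have hGb : ∀ t, ∀ᵐ ω ∂μ, |(μ[X t|ℋ t]) ω| ≤ 1 := by
    intro t
    have := ae_bdd_condExp_of_ae_bdd (m := ℋ t) (μ := μ) (R := 1)
      (ae_of_all _ fun ω => by simpa using hXb t ω)
    simpa using this
  have hDb : ∀ᵐ ω ∂μ, ∀ t, |D t ω| ≤ 2 := by
    rw [ae_all_iff]
    intro t
    filter_upwards [hGb t] with ω hω
    calc |D t ω| ≤ |X t ω| + |(μ[X t|ℋ t]) ω| := abs_sub _ _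
      _ ≤ 1 + 1 := add_le_add (hXb t ω) hω
      _ = 2 := by norm_num
  -- the martingale
  set f : ℕ → Ω → ℝ := fun n ω => ∑ t ∈ Finset.range n, ((t : ℝ) + 1)⁻¹ * D t ω with hf
  have hfm : ∀ n, StronglyMeasurable[ℋ n] (f n) := by
    intro n
    apply Finset.stronglyMeasurable_fun_sum
    intro t ht
    exact ((hDm t).mono (ℋ.mono (Finset.mem_range.1 ht))).const_mul _
  have hfint : ∀ n, Integrable (f n) μ := fun n =>
    integrable_finset_sum _ fun t _ => (hDint t).const_mul _
  have hcondD : ∀ t, μ[D t|ℋ t] =ᵐ[μ] 0 := by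
    intro t
    have h1 : μ[D t|ℋ t] =ᵐ[μ] μ[X t|ℋ t] - μ[μ[X t|ℋ t]|ℋ t] :=
      condExp_sub (hXint t) integrable_condExp _
    have h2 : μ[μ[X t|ℋ t]|ℋ t] = μ[X t|ℋ t] :=
      condExp_of_stronglyMeasurable (ℋ.le t) stronglyMeasurable_condExp integrable_condExp
    filter_upwards [h1] with ω hω
    simp [hω, h2]
  have hmart : Martingale f ℋ μ := by
    refine martingale_nat (fun n => hfm n) hfint fun n => ?_
    have h1 : f (n + 1) = f n + (((n : ℝ) + 1)⁻¹ • D n) := by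
      funext ω; simp [hf, Finset.sum_range_succ]
    have h2 : μ[f (n + 1)|ℋ n]
        =ᵐ[μ] μ[f n|ℋ n] + μ[((n : ℝ) + 1)⁻¹ • D n|ℋ n] := by
      rw [h1]
      exact condExp_add (hfint n) ((hDint n).smul _) _
    have h3 : μ[f n|ℋ n] = f n :=
      condExp_of_stronglyMeasurable (ℋ.le n) (hfm n) (hfint n)
    have h4 : μ[((n : ℝ) + 1)⁻¹ • D n|ℋ n] =ᵐ[μ] ((n : ℝ) + 1)⁻¹ • μ[D n|ℋ n] :=
      condExp_smul _ _ _
    filter_upwards [h2, h4, hcondD n] with ω hω2 hω4 hω0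
    rw [hω2, Pi.add_apply, h3, hω4, Pi.smul_apply, hω0]
    simp
  -- integrability of products
  have hfbd : ∀ n, ∀ᵐ ω ∂μ, |f n ω| ≤ ∑ t ∈ Finset.range n, 2 * ((t : ℝ) + 1)⁻¹ := by
    intro n
    filter_upwards [hDb] with ω hω
    calc |f n ω| ≤ ∑ t ∈ Finset.range n, |((t : ℝ) + 1)⁻¹ * D t ω| :=
          Finset.abs_sum_le_sum_abs _ _
      _ ≤ ∑ t ∈ Finset.range n, 2 * ((t : ℝ) + 1)⁻¹ := by
          refine Finset.sum_le_sum fun t _ => ?_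
          rw [abs_mul, abs_of_nonneg (by positivity : (0:ℝ) ≤ ((t : ℝ) + 1)⁻¹)]
          rw [mul_comm]
          exact mul_le_mul_of_nonneg_right (hω t) (by positivity)
  have hfDint : ∀ n, Integrable (f n * D n) μ := by
    intro n
    refine (integrable_const ((∑ t ∈ Finset.range n, 2 * ((t : ℝ) + 1)⁻¹) * 2)).mono'
      (((hfm n).mono (ℋ.le n)).mul ((hDm n).mono (ℋ.le _))).aestronglyMeasurable ?_
    filter_upwards [hfbd n, hDb] with ω h1 h2
    rw [Pi.mul_apply, Real.norm_eq_abs, abs_mul]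
    exact mul_le_mul h1 (h2 n) (abs_nonneg _) (Finset.sum_nonneg fun t _ => by positivity)
  have hfsqint : ∀ n, Integrable (fun ω => f n ω ^ 2) μ := by
    intro n
    have hm2 : StronglyMeasurable fun ω => f n ω ^ 2 := by
      have h := ((hfm n).mono (ℋ.le n)).mul ((hfm n).mono (ℋ.le n))
      convert h using 1; funext ω; simp [pow_two]
    refine (integrable_const ((∑ t ∈ Finset.range n, 2 * ((t : ℝ) + 1)⁻¹) ^ 2)).mono'
      hm2.aestronglyMeasurable ?_
    filter_upwards [hfbd n] with ω h1
    rw [Real.norm_eq_abs, abs_pow]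
    exact pow_le_pow_left₀ (abs_nonneg _) h1 2
  have hDsqint : ∀ n, Integrable (fun ω => D n ω ^ 2) μ := by
    intro n
    have hm2 : StronglyMeasurable fun ω => D n ω ^ 2 := by
      have h := ((hDm n).mono (ℋ.le _)).mul ((hDm n).mono (ℋ.le _))
      convert h using 1; funext ω; simp [pow_two]
    refine (integrable_const (4 : ℝ)).mono' hm2.aestronglyMeasurable ?_
    filter_upwards [hDb] with ω h2
    rw [Real.norm_eq_abs, abs_pow]
    calc |D n ω| ^ 2 ≤ 2 ^ 2 := pow_le_pow_left₀ (abs_nonneg _) (h2 n) 2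
      _ = 4 := by norm_num
  -- the cross term vanishes
  have hcross : ∀ n, ∫ ω, f n ω * D n ω ∂μ = 0 := by
    intro n
    have h1 : ∫ ω, (f n * D n) ω ∂μ = ∫ ω, (μ[f n * D n|ℋ n]) ω ∂μ :=
      (integral_condExp (ℋ.le n)).symm
    have h2 : μ[f n * D n|ℋ n] =ᵐ[μ] f n * μ[D n|ℋ n] :=
      condExp_mul_of_stronglyMeasurable_left (hfm n) (hfDint n) (hDint n)
    have h3 : μ[f n * D n|ℋ n] =ᵐ[μ] 0 := by
      filter_upwards [h2, hcondD n] with ω hω2 hω0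
      rw [hω2, Pi.mul_apply, hω0]
      simp
    calc ∫ ω, f n ω * D n ω ∂μ = ∫ ω, (μ[f n * D n|ℋ n]) ω ∂μ := h1
      _ = 0 := by rw [integral_congr_ae h3]; simp
  -- second moment bound
  have hDsq_le : ∀ n, ∫ ω, D n ω ^ 2 ∂μ ≤ 4 := by
    intro n
    calc ∫ ω, D n ω ^ 2 ∂μ ≤ ∫ _ω, (4 : ℝ) ∂μ := by
          refine integral_mono_ae (hDsqint n) (integrable_const _) ?_
          filter_upwards [hDb] with ω h2
          calc D n ω ^ 2 = |D n ω| ^ 2 := (sq_abs _).symm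
            _ ≤ 2 ^ 2 := pow_le_pow_left₀ (abs_nonneg _) (h2 n) 2
            _ = 4 := by norm_num
      _ = 4 := by simp
  have hsq : ∀ n, ∫ ω, f n ω ^ 2 ∂μ ≤ ∑ t ∈ Finset.range n, 4 * (((t : ℝ) + 1)⁻¹) ^ 2 := by
    intro n
    induction n with
    | zero => simp [hf]
    | succ n ih =>
        set c : ℝ := ((n : ℝ) + 1)⁻¹ with hc
        have hexp : ∀ ω, f (n + 1) ω ^ 2 =
            f n ω ^ 2 + (2 * c) * (f n ω * D n ω) + c ^ 2 * D n ω ^ 2 := by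
          intro ω
          simp only [hf, Finset.sum_range_succ, hc]
          ring
        have hint2 : Integrable (fun ω => (2 * c) * (f n ω * D n ω)) μ :=
          (hfDint n).const_mul _
        have hint3 : Integrable (fun ω => c ^ 2 * D n ω ^ 2) μ :=
          (hDsqint n).const_mul _
        have hint12 : Integrable (fun ω => f n ω ^ 2 + (2 * c) * (f n ω * D n ω)) μ :=
          (hfsqint n).add hint2
        have e1 : ∫ ω, f (n + 1) ω ^ 2 ∂μ
            = ∫ ω, (f n ω ^ 2 + (2 * c) * (f n ω * D n ω) + c ^ 2 * D n ω ^ 2) ∂μ :=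
          integral_congr_ae (ae_of_all _ hexp)
        have e2 : ∫ ω, (f n ω ^ 2 + (2 * c) * (f n ω * D n ω) + c ^ 2 * D n ω ^ 2) ∂μ
            = (∫ ω, (f n ω ^ 2 + (2 * c) * (f n ω * D n ω)) ∂μ)
              + ∫ ω, c ^ 2 * D n ω ^ 2 ∂μ :=
          integral_add hint12 hint3
        have e3 : ∫ ω, (f n ω ^ 2 + (2 * c) * (f n ω * D n ω)) ∂μ
            = (∫ ω, f n ω ^ 2 ∂μ) + ∫ ω, (2 * c) * (f n ω * D n ω) ∂μ :=
          integral_add (hfsqint n) hint2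
        have e4 : ∫ ω, (2 * c) * (f n ω * D n ω) ∂μ
            = (2 * c) * ∫ ω, f n ω * D n ω ∂μ := integral_const_mul _ _
        have e5 : ∫ ω, c ^ 2 * D n ω ^ 2 ∂μ = c ^ 2 * ∫ ω, D n ω ^ 2 ∂μ :=
          integral_const_mul _ _
        have hlast : c ^ 2 * ∫ ω, D n ω ^ 2 ∂μ ≤ c ^ 2 * 4 :=
          mul_le_mul_of_nonneg_left (hDsq_le n) (by positivity)
        have hsumeq : ∑ t ∈ Finset.range (n + 1), 4 * (((t : ℝ) + 1)⁻¹) ^ 2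
            = (∑ t ∈ Finset.range n, 4 * (((t : ℝ) + 1)⁻¹) ^ 2) + 4 * c ^ 2 :=
          Finset.sum_range_succ _ _
        rw [e1, e2, e3, e4, hcross n, mul_zero, add_zero, e5, hsumeq]
        linarith
  -- a uniform L¹ bound
  have hsummable : Summable (fun t : ℕ => 4 * (((t : ℝ) + 1)⁻¹) ^ 2) := by
    have h1 : Summable (fun t : ℕ => 1 / ((t : ℝ) + 1) ^ 2) := by
      have := (summable_nat_add_iff 1).2 (Real.summable_one_div_nat_pow.2 (le_refl 2))
      exact this.congr fun t => by push_cast; ring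
    exact (h1.mul_left 4).congr fun t => by rw [one_div, inv_pow]
  set C : ℝ := ∑' t : ℕ, 4 * (((t : ℝ) + 1)⁻¹) ^ 2 with hCdef
  have hC0 : 0 ≤ C := tsum_nonneg fun t => by positivity
  have hsqC : ∀ n, ∫ ω, f n ω ^ 2 ∂μ ≤ C := fun n =>
    (hsq n).trans (Summable.sum_le_tsum _ (fun t _ => by positivity) hsummable)
  set R : NNReal := (C ^ (2⁻¹ : ℝ)).toNNReal with hR
  have hL1 : ∀ n, eLpNorm (f n) 1 μ ≤ (R : ℝ≥0∞) := by
    intro n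
    have hmem : MemLp (f n) 2 μ := by
      refine MemLp.mono_exponent ?_ (le_top : (2 : ℝ≥0∞) ≤ ⊤)
      exact memLp_top_of_bound ((hfm n).mono (ℋ.le n)).aestronglyMeasurable
        (∑ t ∈ Finset.range n, 2 * ((t : ℝ) + 1)⁻¹)
        (by filter_upwards [hfbd n] with ω hω using by rwa [Real.norm_eq_abs])
    have h2 : eLpNorm (f n) 2 μ ≤ ENNReal.ofReal (C ^ (2⁻¹ : ℝ)) := by
      rw [hmem.eLpNorm_eq_integral_rpow_norm (by norm_num) (by norm_num)]
      refine ENNReal.ofReal_le_ofReal ?_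
      have hnorm : ∫ ω, ‖f n ω‖ ^ (2 : ℝ≥0∞).toReal ∂μ = ∫ ω, f n ω ^ 2 ∂μ := by
        refine integral_congr_ae (ae_of_all _ fun ω => ?_)
        show ‖f n ω‖ ^ (2 : ℝ≥0∞).toReal = f n ω ^ 2
        rw [ENNReal.toReal_ofNat, Real.norm_eq_abs,
          show ((2 : ℝ)) = ((2 : ℕ) : ℝ) by norm_num, Real.rpow_natCast, sq_abs]
      rw [hnorm, ENNReal.toReal_ofNat]
      exact Real.rpow_le_rpow (integral_nonneg fun ω => sq_nonneg _) (hsqC n) (by norm_num)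
    calc eLpNorm (f n) 1 μ ≤ eLpNorm (f n) 2 μ :=
          eLpNorm_le_eLpNorm_of_exponent_le (by norm_num)
            ((hfm n).mono (ℋ.le n)).aestronglyMeasurable
      _ ≤ ENNReal.ofReal (C ^ (2⁻¹ : ℝ)) := h2
      _ = (R : ℝ≥0∞) := rfl
  have hconv := hmart.submartingale.ae_tendsto_limitProcess hL1
  filter_upwards [hconv] with ω hω
  exact kronecker_aux hω

/-- Theorem 1 of the paper: under the Thompson sampling property, the empirical visit frequency
`N_{B,T}/T` of any set of actions `B` converges almost surely to `P(A*(θ*) ∈ B | H_∞)`. -/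
theorem thompson_sampling_empirical_frequency
    {Ω : Type*} {m0 : MeasurableSpace Ω} {μ : Measure Ω} [IsProbabilityMeasure μ]
    {𝒜 : Type*} [Countable 𝒜] [MeasurableSpace 𝒜] [MeasurableSingletonClass 𝒜]
    (ℋ : Filtration ℕ m0) (A : ℕ → Ω → 𝒜) (Astar : Ω → 𝒜)
    (hA : ∀ t, Measurable[ℋ (t + 1)] (A t)) (hAstar : Measurable Astar)
    (hTS : ∀ (t : ℕ) (B : Set 𝒜),
      μ[Set.indicator (A t ⁻¹' B) (fun _ => (1 : ℝ)) | ℋ t]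
        =ᵐ[μ] μ[Set.indicator (Astar ⁻¹' B) (fun _ => (1 : ℝ)) | ℋ t])
    (B : Set 𝒜) :
    ∀ᵐ ω ∂μ, Tendsto
      (fun T : ℕ => (1 / (T : ℝ)) * ∑ t ∈ Finset.range T,
        Set.indicator (A t ⁻¹' B) (fun _ => (1 : ℝ)) ω)
      atTop (𝓝 ((μ[Set.indicator (Astar ⁻¹' B) (fun _ => (1 : ℝ)) | ⨆ t, ℋ t]) ω)) := by
  classical
  have hB : MeasurableSet B := (Set.to_countable B).measurableSet
  set X : ℕ → Ω → ℝ := fun t => Set.indicator (A t ⁻¹' B) (fun _ => (1 : ℝ)) with hX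
  set Y : Ω → ℝ := Set.indicator (Astar ⁻¹' B) (fun _ => (1 : ℝ)) with hY
  have hXm : ∀ t, StronglyMeasurable[ℋ (t + 1)] (X t) := fun t =>
    stronglyMeasurable_const.indicator (hA t hB)
  have hXb : ∀ t ω, |X t ω| ≤ 1 := by
    intro t ω
    by_cases h : ω ∈ A t ⁻¹' B <;> simp [hX, Set.indicator_apply, h]
  have hslln := mg_slln (μ := μ) ℋ X hXm hXb
  have hlevy : ∀ᵐ ω ∂μ, Tendsto (fun n => (μ[Y|ℋ n]) ω) atTop (𝓝 ((μ[Y|⨆ n, ℋ n]) ω)) :=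
    tendsto_ae_condExp Y
  have hts : ∀ᵐ ω ∂μ, ∀ t, (μ[X t|ℋ t]) ω = (μ[Y|ℋ t]) ω := ae_all_iff.2 fun t => hTS t B
  filter_upwards [hslln, hlevy, hts] with ω h1 h2 h3
  have h4 : Tendsto (fun T : ℕ => (T : ℝ)⁻¹ * ∑ t ∈ Finset.range T, (μ[X t|ℋ t]) ω)
      atTop (𝓝 ((μ[Y|⨆ t, ℋ t]) ω)) := by
    refine Tendsto.congr (fun T => ?_) h2.cesaro
    exact congrArg _ (Finset.sum_congr rfl fun t _ => (h3 t).symm)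
  have h5 := h1.add h4
  rw [zero_add] at h5
  refine h5.congr fun T => ?_
  rw [one_div, ← mul_add, ← Finset.sum_add_distrib]
  congr 1
  exact Finset.sum_congr rfl fun t _ => by ring
end

section
/- Suppose a Thompson sampling agent on a countable ordered action set {a_1, a_2, ...} achieves sub-linear Bayesian regret, i.e., (1/T) ∑_{t=1}^T E[Y_{A*,t} − Y_{A_t,t}] → 0. Then for any indices i ≤ j, almost surely 1_{(Θ^j)^c}(θ*) · P(A*(θ*) = a_i | H_∞) = 0, where Θ^j = ⋃_{k=1}^j Θ_k and Θ_k = {θ : A*(θ) = a_k}. -/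
open MeasureTheory Filter Topology

private lemma meas_comp_nat {Ω : Type*} [MeasurableSpace Ω]
    {u : ℕ → Ω → ℝ} (hu : ∀ a, Measurable (u a)) {N : Ω → ℕ} (hN : Measurable N) :
    Measurable fun ω => u (N ω) ω := by
  have h : Measurable fun p : Ω × ℕ => u p.2 p.1 :=
    measurable_from_prod_countable_left fun a => hu a
  exact h.comp (measurable_id.prodMk hN)

private lemma integral_partition {Ω : Type*} [MeasurableSpace Ω] {μ : Measure Ω}
    {v : Ω → ℝ} (hv : Integrable v μ) {N : Ω → ℕ} (hN : Measurable N) :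
    ∫ ω, v ω ∂μ = ∑' a : ℕ, ∫ ω in N ⁻¹' {a}, v ω ∂μ := by
  have hcover : (⋃ a : ℕ, N ⁻¹' {a}) = Set.univ := by ext ω; simp
  rw [← setIntegral_univ (f := v), ← hcover]
  refine integral_iUnion (fun a => hN (measurableSet_singleton a)) ?_ ?_
  · exact fun a b hab => Set.disjoint_left.2 fun ω ha hb => hab (ha.symm.trans hb)
  · rw [hcover]; exact hv.integrableOn

private lemma integral_eq_of_fiber {Ω : Type*} [MeasurableSpace Ω] {μ : Measure Ω}
    {v w : Ω → ℝ} (hv : Integrable v μ) (hw : Integrable w μ)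
    {N : Ω → ℕ} (hN : Measurable N)
    (h : ∀ a, ∫ ω in N ⁻¹' {a}, v ω ∂μ = ∫ ω in N ⁻¹' {a}, w ω ∂μ) :
    ∫ ω, v ω ∂μ = ∫ ω, w ω ∂μ := by
  rw [integral_partition hv hN, integral_partition hw hN]
  exact tsum_congr h


theorem thompson_lemma1
    {Ω : Type*} {m0 : MeasurableSpace Ω} {μ : Measure Ω} [IsProbabilityMeasure μ]
    {Θ : Type*} [mΘ : MeasurableSpace Θ]
    (θstar : Ω → Θ) (hθ : Measurable θstar)
    (f : Θ → ℕ → ℝ) (hf : ∀ a, Measurable fun θ => f θ a)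
    (Astar : Θ → ℕ) (hAstarmeas : Measurable Astar)
    -- `Astar θ` is the arg max of `f θ ·` with smallest-index tie-breaking
    (hopt : ∀ θ a, f θ a ≤ f θ (Astar θ))
    (hmin : ∀ θ k, (∀ a, f θ a ≤ f θ k) → Astar θ ≤ k)
    (ℋ : Filtration ℕ m0)
    -- `A t` is the action drawn at time `t+1`, chosen given the history `ℋ t`
    (A : ℕ → Ω → ℕ) (hA : ∀ t, Measurable[ℋ (t + 1)] (A t))
    (Y : ℕ → ℕ → Ω → ℝ) (hY : ∀ a t, Measurable (Y a t))
    (hYint : ∀ t, Integrable (fun ω => ⨆ a, |Y a t ω|) μ)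
    (hYbdd : ∀ t, ∀ᵐ ω ∂μ, BddAbove (Set.range fun a => |Y a t ω|))
    (hmean : ∀ a t : ℕ,
      μ[Y a t | MeasurableSpace.comap (fun ω => (θstar ω, A t ω)) inferInstance]
        =ᵐ[μ] fun ω => f (θstar ω) a)
    -- the Thompson sampling property
    (hTS : ∀ (t : ℕ) (B : Set ℕ),
      μ[Set.indicator (A t ⁻¹' B) (fun _ => (1 : ℝ)) | ℋ t]
        =ᵐ[μ] μ[Set.indicator ((fun ω => Astar (θstar ω)) ⁻¹' B) (fun _ => (1 : ℝ)) | ℋ t])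
    -- conditional independence of `θ*` and `A t` given the history `ℋ t`
    (hCI : ∀ (t : ℕ) (S : Set Θ) (a : ℕ), MeasurableSet S →
      μ[Set.indicator (θstar ⁻¹' S ∩ A t ⁻¹' {a}) (fun _ => (1 : ℝ)) | ℋ t]
        =ᵐ[μ] fun ω => (μ[Set.indicator (θstar ⁻¹' S) (fun _ => (1 : ℝ)) | ℋ t]) ω *
            (μ[Set.indicator (A t ⁻¹' {a}) (fun _ => (1 : ℝ)) | ℋ t]) ω)
    -- sub-linear Bayesian regret
    (hregret : Tendsto (fun T : ℕ => (1 / (T : ℝ)) * ∑ t ∈ Finset.range T,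
        ∫ ω, (Y (Astar (θstar ω)) t ω - Y (A t ω) t ω) ∂μ) atTop (𝓝 0))
    (i j : ℕ) (hij : i ≤ j) :
    ∀ᵐ ω ∂μ, j < Astar (θstar ω) →
      (μ[Set.indicator ((fun ω' => Astar (θstar ω')) ⁻¹' {i}) (fun _ => (1 : ℝ)) | ⨆ t, ℋ t]) ω = 0 := by

  have hAm : ∀ t, Measurable (A t) := fun t => (hA t).mono (ℋ.le (t+1)) le_rfl
  have hmL : (⨆ t, ℋ t : MeasurableSpace Ω) ≤ m0 := iSup_le fun t => ℋ.le t
  set mσ : ℕ → MeasurableSpace Ω :=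
    fun t => MeasurableSpace.comap (fun ω => (θstar ω, A t ω)) inferInstance with hmσdef
  have hmσ : ∀ t, mσ t ≤ m0 := fun t => (hθ.prodMk (hAm t)).comap_le
  have hmσ_At : ∀ t a, MeasurableSet[mσ t] (A t ⁻¹' {a}) := fun t a =>
    ⟨Set.univ ×ˢ {a}, MeasurableSet.univ.prod (measurableSet_singleton a),
      by ext ω; simp [eq_comm]⟩
  have hmσ_Astar : ∀ t a, MeasurableSet[mσ t] ((fun ω => Astar (θstar ω)) ⁻¹' {a}) := fun t a =>
    ⟨(Astar ⁻¹' {a}) ×ˢ Set.univ, (hAstarmeas (measurableSet_singleton a)).prod MeasurableSet.univ,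
      by ext ω; simp [eq_comm]⟩
  have hGbd : ∀ t, ∀ᵐ ω ∂μ, ∀ a, |Y a t ω| ≤ ⨆ b, |Y b t ω| := fun t => by
    filter_upwards [hYbdd t] with ω hω a
    exact le_ciSup hω a
  have hYaint : ∀ a t, Integrable (Y a t) μ := fun a t => by
    refine (hYint t).mono (hY a t).aestronglyMeasurable ?_
    filter_upwards [hGbd t] with ω hω
    exact (hω a).trans (le_abs_self _)
  have hfbd : ∀ t, ∀ᵐ ω ∂μ, ∀ a,
      |f (θstar ω) a| ≤ (μ[(fun ω => ⨆ b, |Y b t ω|) | mσ t]) ω := by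
    intro t
    rw [ae_all_iff]
    intro a
    have h1 : μ[Y a t | mσ t] ≤ᵐ[μ] μ[(fun ω => ⨆ b, |Y b t ω|) | mσ t] :=
      condExp_mono (hYaint a t) (hYint t)
        (by filter_upwards [hGbd t] with ω hω; exact (le_abs_self _).trans (hω a))
    have h2 : μ[(fun ω => -(⨆ b, |Y b t ω|)) | mσ t] ≤ᵐ[μ] μ[Y a t | mσ t] :=
      condExp_mono ((hYint t).neg) (hYaint a t)
        (by filter_upwards [hGbd t] with ω hω; exact neg_le.1 ((neg_le_abs _).trans (hω a)))
    have h3 : μ[(fun ω => -(⨆ b, |Y b t ω|)) | mσ t]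
        =ᵐ[μ] fun ω => -((μ[(fun ω => ⨆ b, |Y b t ω|) | mσ t]) ω) :=
      condExp_neg (fun ω => ⨆ b, |Y b t ω|) (m := mσ t) (μ := μ)
    filter_upwards [h1, h2, h3, hmean a t] with ω h1 h2 h3 h4
    rw [← h4, abs_le]
    refine ⟨?_, h1⟩
    rw [h3] at h2
    exact h2
  -- composed functions
  have hYAm : ∀ t, Measurable fun ω => Y (A t ω) t ω :=
    fun t => meas_comp_nat (fun a => hY a t) (hAm t)
  have hYSm : ∀ t, Measurable fun ω => Y (Astar (θstar ω)) t ω :=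
    fun t => meas_comp_nat (fun a => hY a t) (hAstarmeas.comp hθ)
  have hYAint : ∀ t, Integrable (fun ω => Y (A t ω) t ω) μ := fun t => by
    refine (hYint t).mono (hYAm t).aestronglyMeasurable ?_
    filter_upwards [hGbd t] with ω hω
    exact (hω (A t ω)).trans (le_abs_self _)
  have hYSint : ∀ t, Integrable (fun ω => Y (Astar (θstar ω)) t ω) μ := fun t => by
    refine (hYint t).mono (hYSm t).aestronglyMeasurable ?_
    filter_upwards [hGbd t] with ω hω
    exact (hω _).trans (le_abs_self _)
  have hφm : ∀ t, Measurable fun ω => f (θstar ω) (A t ω) :=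
    fun t => meas_comp_nat (fun a => (hf a).comp hθ) (hAm t)
  have hψm : Measurable fun ω => f (θstar ω) (Astar (θstar ω)) :=
    meas_comp_nat (fun a => (hf a).comp hθ) (hAstarmeas.comp hθ)
  have hφint : ∀ t, Integrable (fun ω => f (θstar ω) (A t ω)) μ := fun t => by
    refine (integrable_condExp (m := mσ t)
      (f := fun ω => ⨆ b, |Y b t ω|)).mono (hφm t).aestronglyMeasurable ?_
    filter_upwards [hfbd t] with ω hω
    exact (hω (A t ω)).trans (le_abs_self _)
  have hψint : Integrable (fun ω => f (θstar ω) (Astar (θstar ω))) μ := by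
    refine (integrable_condExp (m := mσ 0)
      (f := fun ω => ⨆ b, |Y b 0 ω|)).mono hψm.aestronglyMeasurable ?_
    filter_upwards [hfbd 0] with ω hω
    exact (hω _).trans (le_abs_self _)
  -- fiberwise reduction
  have hfiber : ∀ (t : ℕ) (N : Ω → ℕ), Measurable N →
      (∀ a, MeasurableSet[mσ t] (N ⁻¹' {a})) →
      Integrable (fun ω => Y (N ω) t ω) μ → Integrable (fun ω => f (θstar ω) (N ω)) μ →
      ∫ ω, Y (N ω) t ω ∂μ = ∫ ω, f (θstar ω) (N ω) ∂μ := by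
    intro t N hN hNσ hint1 hint2
    refine integral_eq_of_fiber hint1 hint2 hN (fun a => ?_)
    have hNa : MeasurableSet (N ⁻¹' {a}) := hN (measurableSet_singleton a)
    have e1 : ∫ ω in N ⁻¹' {a}, Y (N ω) t ω ∂μ = ∫ ω in N ⁻¹' {a}, Y a t ω ∂μ :=
      setIntegral_congr_fun hNa (fun ω hω => by
        simp only [Set.mem_preimage, Set.mem_singleton_iff] at hω; rw [hω])
    have e2 : ∫ ω in N ⁻¹' {a}, f (θstar ω) (N ω) ∂μ = ∫ ω in N ⁻¹' {a}, f (θstar ω) a ∂μ :=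
      setIntegral_congr_fun hNa (fun ω hω => by
        simp only [Set.mem_preimage, Set.mem_singleton_iff] at hω; rw [hω])
    have e3 : ∫ ω in N ⁻¹' {a}, Y a t ω ∂μ = ∫ ω in N ⁻¹' {a}, (μ[Y a t | mσ t]) ω ∂μ :=
      (setIntegral_condExp (hmσ t) (hYaint a t) (hNσ a)).symm
    have e4 : ∫ ω in N ⁻¹' {a}, (μ[Y a t | mσ t]) ω ∂μ
        = ∫ ω in N ⁻¹' {a}, f (θstar ω) a ∂μ :=
      integral_congr_ae (ae_restrict_of_ae (hmean a t))
    rw [e1, e2, e3, e4]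
  have hr : ∀ t, (∫ ω, (Y (Astar (θstar ω)) t ω - Y (A t ω) t ω) ∂μ)
      = ∫ ω, (f (θstar ω) (Astar (θstar ω)) - f (θstar ω) (A t ω)) ∂μ := by
    intro t
    have e1 := hfiber t (fun ω => Astar (θstar ω)) (hAstarmeas.comp hθ)
      (hmσ_Astar t) (hYSint t) hψint
    have e2 := hfiber t (A t) (hAm t) (hmσ_At t) (hYAint t) (hφint t)
    rw [integral_sub (hYSint t) (hYAint t), integral_sub hψint (hφint t), e1, e2]
  -- key claim
  have hind : ∀ (s : Set Ω) (ω : Ω), 0 ≤ Set.indicator s (fun _ => (1:ℝ)) ω ∧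
      Set.indicator s (fun _ => (1:ℝ)) ω ≤ 1 := by
    intro s ω; by_cases h : ω ∈ s <;> simp [h]
  have hbound : ∀ (g : Ω → ℝ), Integrable g μ → (∀ ω, 0 ≤ g ω) → (∀ ω, g ω ≤ 1) →
      ∀ (m : MeasurableSpace Ω), m ≤ m0 →
      ∀ᵐ ω ∂μ, 0 ≤ (μ[g|m]) ω ∧ (μ[g|m]) ω ≤ 1 := by
    intro g hgint hg0 hg1 m hm
    have h0 : 0 ≤ᵐ[μ] μ[g|m] := condExp_nonneg (ae_of_all _ hg0)
    have h1 : μ[g|m] ≤ᵐ[μ] μ[(fun _ => (1:ℝ))|m] :=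
      condExp_mono hgint (integrable_const 1) (ae_of_all _ hg1)
    have h2 : μ[(fun _ => (1:ℝ))|m] = fun _ => (1:ℝ) := condExp_const hm 1
    filter_upwards [h0, h1] with ω h0 h1
    exact ⟨h0, by rw [h2] at h1; exact h1⟩
  have key : ∀ S : Set Θ, MeasurableSet S → ∀ ε : ℝ, 0 < ε →
      (∀ θ' ∈ S, ε ≤ f θ' (Astar θ') - f θ' i) →
      ∀ᵐ ω ∂μ, θstar ω ∈ S →
        (μ[Set.indicator ((fun ω' => Astar (θstar ω')) ⁻¹' {i})
          (fun _ => (1 : ℝ)) | ⨆ t, ℋ t]) ω = 0 := by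
    intro S hS ε hε hSg
    have hXIint : Integrable (Set.indicator (θstar ⁻¹' S) (fun _ : Ω => (1:ℝ))) μ :=
      (integrable_const 1).indicator (hθ hS)
    have hZIint : Integrable (Set.indicator ((fun ω' => Astar (θstar ω')) ⁻¹' {i})
        (fun _ : Ω => (1:ℝ))) μ :=
      (integrable_const 1).indicator ((hAstarmeas.comp hθ) (measurableSet_singleton i))
    set X : ℕ → Ω → ℝ :=
      fun t => μ[Set.indicator (θstar ⁻¹' S) (fun _ => (1:ℝ)) | ℋ t] with hX
    set W : ℕ → Ω → ℝ :=
      fun t => μ[Set.indicator ((fun ω' => Astar (θstar ω')) ⁻¹' {i})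
        (fun _ => (1:ℝ)) | ℋ t] with hW
    set Xinf : Ω → ℝ :=
      μ[Set.indicator (θstar ⁻¹' S) (fun _ => (1:ℝ)) | ⨆ t, ℋ t] with hXinf
    set Zinf : Ω → ℝ :=
      μ[Set.indicator ((fun ω' => Astar (θstar ω')) ⁻¹' {i})
        (fun _ => (1:ℝ)) | ⨆ t, ℋ t] with hZinf
    have hXconv : ∀ᵐ ω ∂μ, Tendsto (fun t => X t ω) atTop (𝓝 (Xinf ω)) :=
      tendsto_ae_condExp (ℱ := ℋ) _
    have hWconv : ∀ᵐ ω ∂μ, Tendsto (fun t => W t ω) atTop (𝓝 (Zinf ω)) :=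
      tendsto_ae_condExp (ℱ := ℋ) _
    have hXbd : ∀ t, ∀ᵐ ω ∂μ, 0 ≤ X t ω ∧ X t ω ≤ 1 :=
      fun t => hbound _ hXIint (fun ω => (hind _ ω).1) (fun ω => (hind _ ω).2) (ℋ t) (ℋ.le t)
    have hWbd : ∀ t, ∀ᵐ ω ∂μ, 0 ≤ W t ω ∧ W t ω ≤ 1 :=
      fun t => hbound _ hZIint (fun ω => (hind _ ω).1) (fun ω => (hind _ ω).2) (ℋ t) (ℋ.le t)
    have hXinfbd : ∀ᵐ ω ∂μ, 0 ≤ Xinf ω ∧ Xinf ω ≤ 1 :=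
      hbound _ hXIint (fun ω => (hind _ ω).1) (fun ω => (hind _ ω).2) _ hmL
    have hZinfbd : ∀ᵐ ω ∂μ, 0 ≤ Zinf ω ∧ Zinf ω ≤ 1 :=
      hbound _ hZIint (fun ω => (hind _ ω).1) (fun ω => (hind _ ω).2) _ hmL
    -- regret lower bound
    have hstep : ∀ t, ε * ∫ ω, X t ω * W t ω ∂μ ≤
        ∫ ω, (Y (Astar (θstar ω)) t ω - Y (A t ω) t ω) ∂μ := by
      intro t
      have hDm : MeasurableSet (θstar ⁻¹' S ∩ A t ⁻¹' {i}) :=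
        (hθ hS).inter ((hAm t) (measurableSet_singleton i))
      have hDint : Integrable (Set.indicator (θstar ⁻¹' S ∩ A t ⁻¹' {i})
          (fun _ : Ω => (1:ℝ))) μ := (integrable_const 1).indicator hDm
      have hII : ∫ ω, Set.indicator (θstar ⁻¹' S ∩ A t ⁻¹' {i}) (fun _ => (1:ℝ)) ω ∂μ
          = ∫ ω, X t ω * W t ω ∂μ := by
        rw [← integral_condExp (μ := μ) (ℋ.le t)
          (f := Set.indicator (θstar ⁻¹' S ∩ A t ⁻¹' {i}) (fun _ => (1:ℝ)))]
        refine integral_congr_ae ?_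
        filter_upwards [hCI t S i hS, hTS t {i}] with ω h1 h2
        rw [h1, h2]
      rw [hr t, ← hII, ← integral_const_mul]
      refine integral_mono_ae (hDint.const_mul ε) (hψint.sub (hφint t)) (ae_of_all _ ?_)
      intro ω
      show ε * Set.indicator (θstar ⁻¹' S ∩ A t ⁻¹' {i}) (fun _ => (1:ℝ)) ω
        ≤ f (θstar ω) (Astar (θstar ω)) - f (θstar ω) (A t ω)
      by_cases hω : ω ∈ θstar ⁻¹' S ∩ A t ⁻¹' {i}
      · rw [Set.indicator_of_mem hω]
        have hAi : A t ω = i := hω.2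
        have := hSg (θstar ω) hω.1
        rw [hAi]; simpa using this
      · rw [Set.indicator_of_notMem hω]
        simpa using sub_nonneg.2 (hopt (θstar ω) (A t ω))
    -- dominated convergence
    have hconv : Tendsto (fun t => ∫ ω, X t ω * W t ω ∂μ) atTop
        (𝓝 (∫ ω, Xinf ω * Zinf ω ∂μ)) := by
      refine tendsto_integral_of_dominated_convergence (fun _ => (1:ℝ))
        (fun t => ((stronglyMeasurable_condExp.mono (ℋ.le t)).mul
          (stronglyMeasurable_condExp.mono (ℋ.le t))).aestronglyMeasurable)
        (integrable_const 1) (fun t => ?_) ?_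
      · filter_upwards [hXbd t, hWbd t] with ω h1 h2
        rw [Real.norm_eq_abs, abs_of_nonneg (mul_nonneg h1.1 h2.1)]
        calc X t ω * W t ω ≤ 1 * 1 :=
          mul_le_mul h1.2 h2.2 h2.1 zero_le_one
        _ = 1 := one_mul 1
      · filter_upwards [hXconv, hWconv] with ω h1 h2; exact h1.mul h2
    have hnonneg : 0 ≤ ∫ ω, Xinf ω * Zinf ω ∂μ :=
      integral_nonneg_of_ae (by
        filter_upwards [hXinfbd, hZinfbd] with ω h1 h2
        exact mul_nonneg h1.1 h2.1)
    have hcle : ε * ∫ ω, Xinf ω * Zinf ω ∂μ ≤ 0 := by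
      have h1 : Tendsto (fun T : ℕ => (T:ℝ)⁻¹ •
          ∑ t ∈ Finset.range T, ε * ∫ ω, X t ω * W t ω ∂μ) atTop
          (𝓝 (ε * ∫ ω, Xinf ω * Zinf ω ∂μ)) := (hconv.const_mul ε).cesaro
      refine le_of_tendsto_of_tendsto' h1 hregret (fun T => ?_)
      rw [smul_eq_mul, ← one_div]
      exact mul_le_mul_of_nonneg_left (Finset.sum_le_sum fun t _ => hstep t)
        (by positivity)
    have hceq : ∫ ω, Xinf ω * Zinf ω ∂μ = 0 := by
      refine le_antisymm ?_ hnonneg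
      nlinarith
    have hmulint : Integrable (fun ω => Xinf ω * Zinf ω) μ := by
      refine (integrable_const (1:ℝ)).mono
        (((stronglyMeasurable_condExp.mono hmL).mul
          (stronglyMeasurable_condExp.mono hmL)).aestronglyMeasurable) ?_
      filter_upwards [hXinfbd, hZinfbd] with ω h1 h2
      rw [Real.norm_eq_abs, abs_of_nonneg (mul_nonneg h1.1 h2.1)]
      simpa using mul_le_mul h1.2 h2.2 h2.1 zero_le_one
    have hmul0 : (fun ω => Xinf ω * Zinf ω) =ᵐ[μ] 0 := by
      refine (integral_eq_zero_iff_of_nonneg_ae ?_ hmulint).mp hceq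
      filter_upwards [hXinfbd, hZinfbd] with ω h1 h2
      exact mul_nonneg h1.1 h2.1
    -- the set where Xinf vanishes
    have hTm0 : MeasurableSet[⨆ t, ℋ t] (Xinf ⁻¹' {0}) :=
      stronglyMeasurable_condExp.measurable (measurableSet_singleton 0)
    have hTzero : ∀ᵐ ω ∂μ, ω ∈ Xinf ⁻¹' {0} →
        Set.indicator (θstar ⁻¹' S) (fun _ => (1:ℝ)) ω = 0 := by
      have hint0 : ∫ ω in Xinf ⁻¹' {0}, Set.indicator (θstar ⁻¹' S) (fun _ => (1:ℝ)) ω ∂μ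
          = 0 := by
        rw [← setIntegral_condExp hmL hXIint hTm0]
        calc ∫ ω in Xinf ⁻¹' {0}, Xinf ω ∂μ = ∫ ω in Xinf ⁻¹' {0}, (0:ℝ) ∂μ :=
          setIntegral_congr_fun (hmL _ hTm0) (fun ω hω => hω)
        _ = 0 := by simp
      have h1 : Set.indicator (θstar ⁻¹' S) (fun _ => (1:ℝ))
          =ᵐ[μ.restrict (Xinf ⁻¹' {0})] 0 := by
        refine (integral_eq_zero_iff_of_nonneg_ae ?_ hXIint.restrict).mp hint0
        exact ae_restrict_of_ae (ae_of_all _ (fun ω => (hind _ ω).1))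
      exact (ae_restrict_iff' (hmL _ hTm0)).mp h1
    filter_upwards [hmul0, hTzero, hXinfbd] with ω h1 h2 h3 hωS
    by_cases hT : Xinf ω = 0
    · have h4 := h2 hT
      rw [Set.indicator_of_mem (show ω ∈ θstar ⁻¹' S from hωS)] at h4
      exact absurd h4 one_ne_zero
    · have h1' : Xinf ω * Zinf ω = 0 := h1
      rcases mul_eq_zero.mp h1' with h | h
      · exact absurd h hT
      · exact h
  -- conclusion
  have hSmeas : ∀ n : ℕ, MeasurableSet {θ' : Θ | ((n:ℝ)+1)⁻¹ ≤ f θ' (Astar θ') - f θ' i} := by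
    intro n
    have he : {θ' : Θ | ((n:ℝ)+1)⁻¹ ≤ f θ' (Astar θ') - f θ' i}
        = ⋃ k, (Astar ⁻¹' {k} ∩ {θ' | ((n:ℝ)+1)⁻¹ ≤ f θ' k - f θ' i}) := by
      ext θ'
      simp only [Set.mem_iUnion, Set.mem_inter_iff, Set.mem_preimage,
        Set.mem_singleton_iff, Set.mem_setOf_eq]
      constructor
      · intro h; exact ⟨Astar θ', rfl, h⟩
      · rintro ⟨k, hk, h⟩; rw [← hk] at h; exact h
    rw [he]
    exact MeasurableSet.iUnion fun k =>
      (hAstarmeas (measurableSet_singleton k)).inter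
        (measurableSet_le measurable_const ((hf k).sub (hf i)))
  have hkeyn : ∀ᵐ ω ∂μ, ∀ n : ℕ,
      θstar ω ∈ {θ' : Θ | ((n:ℝ)+1)⁻¹ ≤ f θ' (Astar θ') - f θ' i} →
      (μ[Set.indicator ((fun ω' => Astar (θstar ω')) ⁻¹' {i})
        (fun _ => (1 : ℝ)) | ⨆ t, ℋ t]) ω = 0 := by
    rw [ae_all_iff]
    intro n
    exact key _ (hSmeas n) _ (by positivity) (fun θ' hθ' => hθ')
  filter_upwards [hkeyn] with ω hω hj
  have hg0 : 0 < f (θstar ω) (Astar (θstar ω)) - f (θstar ω) i := by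
    rcases (sub_nonneg.2 (hopt (θstar ω) i)).lt_or_eq with h | h
    · exact h
    · exfalso
      have heq : f (θstar ω) i = f (θstar ω) (Astar (θstar ω)) := by linarith
      have hle : Astar (θstar ω) ≤ i :=
        hmin (θstar ω) i (fun a => (hopt (θstar ω) a).trans heq.ge)
      omega
  obtain ⟨n, hn⟩ := exists_nat_one_div_lt hg0
  refine hω n ?_
  have : ((n:ℝ)+1)⁻¹ ≤ f (θstar ω) (Astar (θstar ω)) - f (θstar ω) i := by
    rw [← one_div]; exact hn.le
  exact this
end

section
/- Suppose Thompson sampling on a countable action set achieves sub-linear Bayesian regret, i.e., (1/T) ∑_{t=1}^T E[Y_{A*,t} − Y_{A_t,t}] → 0 as T → ∞. Then for every subset B of the action set, P(A*(θ*) ∈ B | H_∞) = 1_B(A*(θ*)) almost surely. -/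
open MeasureTheory Filter Topology
open scoped NNReal ENNReal

set_option linter.unusedSectionVars false
set_option synthInstance.maxHeartbeats 1000000
set_option maxHeartbeats 1000000

namespace ThompsonAux

variable {Ω : Type*} {m0 : MeasurableSpace Ω} {μ : Measure Ω} [IsProbabilityMeasure μ]
variable {Θ : Type*} [mΘ : MeasurableSpace Θ]

/-- Integral over a countable partition by the fibers of `n`. -/
lemma integral_eq_tsum_fibers {g : Ω → ℝ} (hg : Integrable g μ) {n : Ω → ℕ}
    (hn : Measurable n) :
    ∫ ω, g ω ∂μ = ∑' a : ℕ, ∫ ω in n ⁻¹' {a}, g ω ∂μ := by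
  have hU : (⋃ a : ℕ, n ⁻¹' {a}) = Set.univ := by
    ext ω; simp
  have := MeasureTheory.integral_iUnion (μ := μ) (f := g)
    (s := fun a : ℕ => n ⁻¹' {a})
    (fun a => hn (measurableSet_singleton a))
    (fun a b hab => Set.disjoint_left.2 fun ω h1 h2 => by
      simp only [Set.mem_preimage, Set.mem_singleton_iff] at h1 h2
      exact hab (h1 ▸ h2 ▸ rfl))
    (hg.integrableOn)
  rw [hU] at this
  rw [← this, setIntegral_univ]


/-- Extension of the conditional-independence product property from indicators of
measurable sets in `Θ` to integrable functions of `θ`. -/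
lemma condexp_comp_mul_indicator
    {m : MeasurableSpace Ω} (hm : m ≤ m0)
    {θ : Ω → Θ} (hθ : Measurable[m0] θ)
    {E : Set Ω} (hE : MeasurableSet[m0] E)
    (hCI : ∀ S : Set Θ, MeasurableSet S →
      μ[fun ω => Set.indicator (θ ⁻¹' S) (fun _ => (1:ℝ)) ω
          * Set.indicator E (fun _ => (1:ℝ)) ω | m]
        =ᵐ[μ] fun ω => (μ[Set.indicator (θ ⁻¹' S) (fun _ => (1:ℝ)) | m]) ω
            * (μ[Set.indicator E (fun _ => (1:ℝ)) | m]) ω)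
    {φ : Θ → ℝ} (hφm : AEStronglyMeasurable φ (@Measure.map Ω Θ m0 mΘ θ μ))
    (hφi : Integrable (fun ω => φ (θ ω)) μ) :
    μ[fun ω => φ (θ ω) * Set.indicator E (fun _ => (1:ℝ)) ω | m]
      =ᵐ[μ] fun ω => (μ[fun ω => φ (θ ω) | m]) ω
          * (μ[Set.indicator E (fun _ => (1:ℝ)) | m]) ω := by
  classical
  set ν : Measure Θ := @Measure.map Ω Θ m0 mΘ θ μ with hν
  haveI : IsProbabilityMeasure ν := Measure.isProbabilityMeasure_map hθ.aemeasurable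
  set ι : Ω → ℝ := Set.indicator E (fun _ => (1:ℝ)) with hι
  have hιmeas : Measurable[m0] ι := measurable_const.indicator hE
  have hιbdd : ∀ ω, ‖ι ω‖ ≤ 1 := by
    intro ω
    by_cases h : ω ∈ E <;> simp [hι, Set.indicator_apply, h]
  set q : Ω → ℝ := μ[ι | m] with hq
  have hqbdd : ∀ᵐ ω ∂μ, |q ω| ≤ ((1 : ℝ≥0) : ℝ) := by
    refine ae_bdd_condExp_of_ae_bdd (ae_of_all _ fun ω => ?_)
    simpa [Real.norm_eq_abs] using hιbdd ω
  -- the property to be proved by induction on integrable functions over `ν`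
  set P : (Θ → ℝ) → Prop := fun ψ =>
    μ[fun ω => ψ (θ ω) * ι ω | m] =ᵐ[μ] fun ω => (μ[fun ω => ψ (θ ω) | m]) ω * q ω
    with hP
  have hint_comp : ∀ {ψ : Θ → ℝ}, Integrable ψ ν → Integrable (fun ω => ψ (θ ω)) μ := by
    intro ψ hψ
    rw [hν] at hψ
    exact hψ.comp_aemeasurable hθ.aemeasurable
  have hint_mul : ∀ {u : Ω → ℝ}, Integrable u μ →
      Integrable (fun ω => u ω * ι ω) μ := by
    intro u hu
    refine Integrable.mono' hu.abs (hu.aestronglyMeasurable.mul hιmeas.aestronglyMeasurable)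
      (ae_of_all _ fun ω => ?_)
    rw [Real.norm_eq_abs, abs_mul]
    calc |u ω| * |ι ω| ≤ |u ω| * 1 := by
          refine mul_le_mul_of_nonneg_left ?_ (abs_nonneg _)
          simpa [Real.norm_eq_abs] using hιbdd ω
      _ = |u ω| := mul_one _
  have main : ∀ ⦃ψ : Θ → ℝ⦄, Integrable ψ ν → P ψ := by
    refine Integrable.induction (μ := ν) P ?_ ?_ ?_ ?_
    · -- indicators
      intro c S hS _
      show μ[fun ω => (S.indicator (fun _ => c)) (θ ω) * ι ω | m]
          =ᵐ[μ] fun ω => (μ[fun ω => (S.indicator (fun _ => c)) (θ ω) | m]) ω * q ω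
      have hfun1 : (fun ω => (S.indicator (fun _ => c)) (θ ω) * ι ω)
          = c • fun ω => Set.indicator (θ ⁻¹' S) (fun _ => (1:ℝ)) ω * ι ω := by
        funext ω
        by_cases h : θ ω ∈ S <;>
          simp [Set.indicator_apply, h, Set.mem_preimage]
      have hfun2 : (fun ω => (S.indicator (fun _ => c)) (θ ω))
          = c • fun ω => Set.indicator (θ ⁻¹' S) (fun _ => (1:ℝ)) ω := by
        funext ω
        by_cases h : θ ω ∈ S <;>
          simp [Set.indicator_apply, h, Set.mem_preimage]
      rw [hfun1, hfun2]
      have e1 := condExp_smul (m := m) (μ := μ) c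
        (fun ω => Set.indicator (θ ⁻¹' S) (fun _ => (1:ℝ)) ω * ι ω)
      have e2 := condExp_smul (m := m) (μ := μ) c
        (fun ω => Set.indicator (θ ⁻¹' S) (fun _ => (1:ℝ)) ω)
      have e3 := hCI S hS
      filter_upwards [e1, e2, e3] with ω h1' h2' h3'
      simp only [Pi.smul_apply, smul_eq_mul] at h1' h2' ⊢
      rw [h1', h3', h2']
      ring
    · -- additivity
      intro ψ χ _ hψ hχ Pψ Pχ
      have hψμ := hint_comp hψ
      have hχμ := hint_comp hχ
      show μ[fun ω => (ψ + χ) (θ ω) * ι ω | m]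
          =ᵐ[μ] fun ω => (μ[fun ω => (ψ + χ) (θ ω) | m]) ω * q ω
      have hrw : (fun ω => (ψ + χ) (θ ω) * ι ω)
          = (fun ω => ψ (θ ω) * ι ω) + fun ω => χ (θ ω) * ι ω := by
        funext ω; simp [add_mul]
      have hrw2 : (fun ω => (ψ + χ) (θ ω))
          = (fun ω => ψ (θ ω)) + fun ω => χ (θ ω) := rfl
      rw [hrw, hrw2]
      have e1 := condExp_add (μ := μ) (m := m) (hint_mul hψμ) (hint_mul hχμ)
      have e2 := condExp_add (μ := μ) (m := m) hψμ hχμ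
      filter_upwards [e1, e2, Pψ, Pχ] with ω h1' h2' h3' h4'
      simp only [Pi.add_apply] at h1' h2' ⊢
      rw [h1', h3', h4', h2']
      ring
    · -- closedness in L¹
      haveI : Fact ((1:ℝ≥0∞) ≤ 1) := ⟨le_rfl⟩
      refine IsSeqClosed.isClosed ?_
      intro gs g hmem htend
      rw [Lp.tendsto_Lp_iff_tendsto_eLpNorm'] at htend
      set e : ℕ → ℝ≥0∞ := fun n => eLpNorm ((fun ω => (gs n : Θ → ℝ) (θ ω))
        - fun ω => (g : Θ → ℝ) (θ ω)) 1 μ with he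
      have hen : ∀ n, e n = eLpNorm (⇑(gs n) - ⇑g) 1 ν := by
        intro n
        have h := eLpNorm_map_measure (μ := μ) (f := θ) (p := (1:ℝ≥0∞))
          ((Lp.aestronglyMeasurable (gs n)).sub (Lp.aestronglyMeasurable g)) hθ.aemeasurable
        calc e n = eLpNorm ((⇑(gs n) - ⇑g) ∘ θ) 1 μ := rfl
          _ = eLpNorm (⇑(gs n) - ⇑g) 1 ν := h.symm
      have htend2 : Tendsto e atTop (𝓝 0) := by
        have hee : e = fun n => eLpNorm (⇑(gs n) - ⇑g) 1 ν := funext hen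
        rw [hee]; exact htend
      have hui : ∀ n, Integrable (fun ω => (gs n : Θ → ℝ) (θ ω)) μ :=
        fun n => hint_comp (L1.integrable_coeFn (gs n))
      have hwi : Integrable (fun ω => (g : Θ → ℝ) (θ ω)) μ :=
        hint_comp (L1.integrable_coeFn g)
      -- notation
      set F : Ω → ℝ := μ[fun ω => (g : Θ → ℝ) (θ ω) * ι ω | m] with hF
      set G : Ω → ℝ := fun ω => (μ[fun ω => (g : Θ → ℝ) (θ ω) | m]) ω * q ω with hG
      have hFmeas : AEStronglyMeasurable[m0] F μ :=
        (stronglyMeasurable_condExp.mono hm).aestronglyMeasurable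
      have hGmeas : AEStronglyMeasurable[m0] G μ :=
        ((stronglyMeasurable_condExp.mul stronglyMeasurable_condExp).mono hm).aestronglyMeasurable
      have hFn : ∀ n, eLpNorm ((μ[fun ω => (gs n : Θ → ℝ) (θ ω) * ι ω | m]) - F) 1 μ ≤ e n := by
        intro n
        have hsub := condExp_sub (μ := μ) (m := m) (hint_mul (hui n)) (hint_mul hwi)
        calc eLpNorm ((μ[fun ω => (gs n : Θ → ℝ) (θ ω) * ι ω | m]) - F) 1 μ
            = eLpNorm (μ[(fun ω => (gs n : Θ → ℝ) (θ ω) * ι ω)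
                - fun ω => (g : Θ → ℝ) (θ ω) * ι ω | m]) 1 μ :=
              eLpNorm_congr_ae hsub.symm
          _ ≤ eLpNorm ((fun ω => (gs n : Θ → ℝ) (θ ω) * ι ω)
                - fun ω => (g : Θ → ℝ) (θ ω) * ι ω) 1 μ := eLpNorm_one_condExp_le_eLpNorm _
          _ ≤ e n := by
              refine eLpNorm_mono_ae (ae_of_all _ fun ω => ?_)
              simp only [Pi.sub_apply, Real.norm_eq_abs, ← sub_mul, abs_mul]
              calc |((gs n : Θ → ℝ) (θ ω) - (g : Θ → ℝ) (θ ω))| * |ι ω|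
                  ≤ |((gs n : Θ → ℝ) (θ ω) - (g : Θ → ℝ) (θ ω))| * 1 := by
                    refine mul_le_mul_of_nonneg_left ?_ (abs_nonneg _)
                    simpa [Real.norm_eq_abs] using hιbdd ω
                _ = _ := by rw [mul_one]
      have hGn : ∀ n, eLpNorm ((fun ω => (μ[fun ω => (gs n : Θ → ℝ) (θ ω) | m]) ω * q ω) - G) 1 μ
          ≤ e n := by
        intro n
        have hsub := condExp_sub (μ := μ) (m := m) (hui n) hwi
        calc eLpNorm ((fun ω => (μ[fun ω => (gs n : Θ → ℝ) (θ ω) | m]) ω * q ω) - G) 1 μ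
            ≤ eLpNorm (μ[(fun ω => (gs n : Θ → ℝ) (θ ω)) - fun ω => (g : Θ → ℝ) (θ ω) | m]) 1 μ := by
              refine eLpNorm_mono_ae ?_
              filter_upwards [hsub, hqbdd] with ω h1 h2
              simp only [Pi.sub_apply, Real.norm_eq_abs, hG] at h1 ⊢
              rw [h1, ← sub_mul, abs_mul]
              calc |(μ[fun ω => (gs n : Θ → ℝ) (θ ω)|m]) ω - (μ[fun ω => (g : Θ → ℝ) (θ ω)|m]) ω| * |q ω|
                  ≤ |(μ[fun ω => (gs n : Θ → ℝ) (θ ω)|m]) ω - (μ[fun ω => (g : Θ → ℝ) (θ ω)|m]) ω| * 1 := by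
                    refine mul_le_mul_of_nonneg_left ?_ (abs_nonneg _)
                    simpa using h2
                _ = _ := by rw [mul_one]
          _ ≤ e n := eLpNorm_one_condExp_le_eLpNorm _
      have hFG : ∀ n, eLpNorm (F - G) 1 μ ≤ e n + e n := by
        intro n
        have hsplit : F - G = ((F - μ[fun ω => (gs n : Θ → ℝ) (θ ω) * ι ω | m])
            + ((μ[fun ω => (gs n : Θ → ℝ) (θ ω) * ι ω | m]) - G)) := by
          funext ω; simp
        rw [hsplit]
        refine le_trans (eLpNorm_add_le
          (hFmeas.sub (stronglyMeasurable_condExp.mono hm).aestronglyMeasurable)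
          ((stronglyMeasurable_condExp.mono hm).aestronglyMeasurable.sub hGmeas) le_rfl) ?_
        gcongr
        · rw [eLpNorm_sub_comm]; exact hFn n
        · calc eLpNorm ((μ[fun ω => (gs n : Θ → ℝ) (θ ω) * ι ω | m]) - G) 1 μ
              = eLpNorm ((fun ω => (μ[fun ω => (gs n : Θ → ℝ) (θ ω) | m]) ω * q ω) - G) 1 μ := by
                refine eLpNorm_congr_ae ?_
                have := hmem n
                rw [Set.mem_setOf_eq, hP] at this
                exact this.sub EventuallyEq.rfl
            _ ≤ e n := hGn n
      have hzero : eLpNorm (F - G) 1 μ = 0 := by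
        have hlim : Tendsto (fun n => e n + e n) atTop (𝓝 0) := by
          simpa using htend2.add htend2
        exact le_antisymm (ge_of_tendsto' hlim hFG) zero_le
      have hae : F - G =ᵐ[μ] 0 := by
        rw [← eLpNorm_eq_zero_iff (hFmeas.sub hGmeas) one_ne_zero]
        exact hzero
      rw [Set.mem_setOf_eq, hP]
      filter_upwards [hae] with ω hω
      simpa [sub_eq_zero] using hω
    · -- stability under a.e. equality
      intro ψ χ haeψχ hψint Pψ
      have hcomp : (fun ω => ψ (θ ω)) =ᵐ[μ] fun ω => χ (θ ω) := by
        have := ae_eq_comp (μ := μ) hθ.aemeasurable (g := ψ) (g' := χ) (by rwa [← hν])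
        exact this
      rw [hP]
      refine (condExp_congr_ae ?_).symm.trans (Pψ.trans ?_)
      · exact hcomp.mul EventuallyEq.rfl
      · exact (condExp_congr_ae hcomp).mul EventuallyEq.rfl
  have hφν : Integrable φ ν := by
    rw [hν, integrable_map_measure hφm hθ.aemeasurable]
    exact hφi
  exact main hφν


end ThompsonAux
theorem thompson_posterior_indicator
    {Ω : Type*} {m0 : MeasurableSpace Ω} {μ : Measure Ω} [IsProbabilityMeasure μ]
    {Θ : Type*} [mΘ : MeasurableSpace Θ]
    (θstar : Ω → Θ) (hθ : Measurable θstar)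
    (f : Θ → ℕ → ℝ) (hf : ∀ a, Measurable fun θ => f θ a)
    (Astar : Θ → ℕ) (hAstarmeas : Measurable Astar)
    -- `Astar θ` is the arg max of `f θ ·` with smallest-index tie-breaking
    (hopt : ∀ θ a, f θ a ≤ f θ (Astar θ))
    (hmin : ∀ θ k, (∀ a, f θ a ≤ f θ k) → Astar θ ≤ k)
    (ℋ : Filtration ℕ m0)
    -- `A t` is the action drawn at time `t+1`, chosen given the history `ℋ t`
    (A : ℕ → Ω → ℕ) (hA : ∀ t, Measurable[ℋ (t + 1)] (A t))
    (Y : ℕ → ℕ → Ω → ℝ) (hY : ∀ a t, Measurable (Y a t))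
    (hYint : ∀ t, Integrable (fun ω => ⨆ a, |Y a t ω|) μ)
    (hYbdd : ∀ t, ∀ᵐ ω ∂μ, BddAbove (Set.range fun a => |Y a t ω|))
    (hmean : ∀ a t : ℕ,
      μ[Y a t | MeasurableSpace.comap (fun ω => (θstar ω, A t ω)) inferInstance]
        =ᵐ[μ] fun ω => f (θstar ω) a)
    -- the Thompson sampling property
    (hTS : ∀ (t : ℕ) (B : Set ℕ),
      μ[Set.indicator (A t ⁻¹' B) (fun _ => (1 : ℝ)) | ℋ t]
        =ᵐ[μ] μ[Set.indicator ((fun ω => Astar (θstar ω)) ⁻¹' B) (fun _ => (1 : ℝ)) | ℋ t])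
    -- conditional independence of `θ*` and `A t` given the history `ℋ t`
    (hCI : ∀ (t : ℕ) (S : Set Θ) (a : ℕ), MeasurableSet S →
      μ[Set.indicator (θstar ⁻¹' S ∩ A t ⁻¹' {a}) (fun _ => (1 : ℝ)) | ℋ t]
        =ᵐ[μ] fun ω => (μ[Set.indicator (θstar ⁻¹' S) (fun _ => (1 : ℝ)) | ℋ t]) ω *
            (μ[Set.indicator (A t ⁻¹' {a}) (fun _ => (1 : ℝ)) | ℋ t]) ω)
    -- sub-linear Bayesian regret
    (hregret : Tendsto (fun T : ℕ => (1 / (T : ℝ)) * ∑ t ∈ Finset.range T,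
        ∫ ω, (Y (Astar (θstar ω)) t ω - Y (A t ω) t ω) ∂μ) atTop (𝓝 0))
    (B : Set ℕ) :
    μ[Set.indicator ((fun ω => Astar (θstar ω)) ⁻¹' B) (fun _ => (1 : ℝ)) | ⨆ t, ℋ t]
      =ᵐ[μ] Set.indicator ((fun ω => Astar (θstar ω)) ⁻¹' B) (fun _ => (1 : ℝ)) := by
  classical
  -- basic measurability facts
  have hmtop : (⨆ t, ℋ t) ≤ m0 := iSup_le fun t => ℋ.le t
  have hA' : ∀ t, Measurable[m0] (A t) := fun t => (hA t).mono (ℋ.le (t + 1)) le_rfl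
  have hfap : Measurable fun p : Θ × ℕ => f p.1 p.2 :=
    measurable_from_prod_countable_left fun a => hf a
  have hfn : ∀ (n : Ω → ℕ), Measurable[m0] n →
      Measurable[m0] fun ω => f (θstar ω) (n ω) := fun n hn =>
    hfap.comp (hθ.prodMk hn)
  have hAstar' : Measurable[m0] fun ω => Astar (θstar ω) := hAstarmeas.comp hθ
  have hYn : ∀ (t : ℕ) (n : Ω → ℕ), Measurable[m0] n →
      Measurable[m0] fun ω => Y (n ω) t ω := by
    intro t n hn
    have : Measurable fun p : Ω × ℕ => Y p.2 t p.1 :=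
      measurable_from_prod_countable_left fun a => hY a t
    exact this.comp (measurable_id.prodMk hn)
  -- `m' t` : the σ-algebra generated by `(θstar, A t)`
  set m' : ℕ → MeasurableSpace Ω :=
    fun t => MeasurableSpace.comap (fun ω => (θstar ω, A t ω)) inferInstance with hm'def
  have hm' : ∀ t, m' t ≤ m0 := by
    intro t
    exact (hθ.prodMk (hA' t)).comap_le
  have hApre : ∀ t a, MeasurableSet[m' t] (A t ⁻¹' {a}) := by
    intro t a
    refine ⟨(Set.univ : Set Θ) ×ˢ ({a} : Set ℕ),
      MeasurableSet.univ.prod (measurableSet_singleton a), ?_⟩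
    ext ω; simp [eq_comm]
  have hTpre : ∀ t a, MeasurableSet[m' t] ((fun ω => Astar (θstar ω)) ⁻¹' {a}) := by
    intro t a
    refine ⟨(Astar ⁻¹' {a}) ×ˢ (Set.univ : Set ℕ),
      (hAstarmeas (measurableSet_singleton a)).prod MeasurableSet.univ, ?_⟩
    ext ω; simp [eq_comm]
  -- integrability of the `Y`s
  have hYab : ∀ t a, ∀ᵐ ω ∂μ, |Y a t ω| ≤ (fun ω => ⨆ b, |Y b t ω|) ω := by
    intro t a
    filter_upwards [hYbdd t] with ω hω
    exact le_ciSup hω a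
  have hYint' : ∀ a t, Integrable (Y a t) μ := by
    intro a t
    refine Integrable.mono' (hYint t) (hY a t).aestronglyMeasurable ?_
    filter_upwards [hYab t a] with ω hω
    simpa [Real.norm_eq_abs] using hω
  have hYnint : ∀ (t : ℕ) (n : Ω → ℕ), Measurable[m0] n →
      Integrable (fun ω => Y (n ω) t ω) μ := by
    intro t n hn
    refine Integrable.mono' (hYint t) (hYn t n hn).aestronglyMeasurable ?_
    filter_upwards [hYbdd t] with ω hω
    simpa [Real.norm_eq_abs] using le_ciSup hω (n ω)
  -- a common integrable bound for all `fun ω => f (θstar ω) a`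
  set bound : Ω → ℝ := μ[fun ω => ⨆ b, |Y b 0 ω| | m' 0] with hbound_def
  have hboundint : Integrable bound μ := integrable_condExp
  have hbound : ∀ᵐ ω ∂μ, ∀ a : ℕ, |f (θstar ω) a| ≤ bound ω := by
    rw [ae_all_iff]
    intro a
    have h1 := (hmean a 0).symm
    have h2 : μ[Y a 0 | m' 0] ≤ᵐ[μ] bound := by
      refine condExp_mono (hYint' a 0) (hYint 0) ?_
      filter_upwards [hYab 0 a] with ω hω
      exact le_trans (le_abs_self _) hω
    have h4 : ∀ᵐ ω ∂μ, -(bound ω) ≤ (μ[Y a 0 | m' 0]) ω := by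
      have h3 : (-(fun ω => ⨆ b, |Y b 0 ω|)) ≤ᵐ[μ] Y a 0 := by
        filter_upwards [hYab 0 a] with ω hω
        simp only [Pi.neg_apply]
        have := neg_abs_le (Y a 0 ω)
        linarith
      have h5 := condExp_neg (μ := μ) (m := m' 0) (fun ω => ⨆ b, |Y b 0 ω|)
      have h6 := condExp_mono (m := m' 0) ((hYint 0).neg) (hYint' a 0) h3
      filter_upwards [h5, h6] with ω hω5 hω6
      have hb : (-(μ[fun ω => ⨆ b, |Y b 0 ω| | m' 0])) ω = -(bound ω) := rfl
      rw [hω5] at hω6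
      rw [← hb]
      exact hω6
    filter_upwards [h1, h2, h4] with ω e1 e2 e4
    rw [abs_le]
    constructor
    · rw [e1] at *
      linarith
    · rw [e1] at *
      linarith
  have hfint : ∀ (n : Ω → ℕ), Measurable[m0] n →
      Integrable (fun ω => f (θstar ω) (n ω)) μ := by
    intro n hn
    refine Integrable.mono' hboundint (hfn n hn).aestronglyMeasurable ?_
    filter_upwards [hbound] with ω hω
    simpa [Real.norm_eq_abs] using hω (n ω)
  -- mean identity: for adapted countable `n`, `∫ Y (n ω) t ω = ∫ f (θstar ω) (n ω)`
  have hswap : ∀ (t : ℕ) (n : Ω → ℕ), Measurable[m0] n →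
      (∀ a, MeasurableSet[m' t] (n ⁻¹' {a})) →
      ∫ ω, Y (n ω) t ω ∂μ = ∫ ω, f (θstar ω) (n ω) ∂μ := by
    intro t n hn hnm
    rw [ThompsonAux.integral_eq_tsum_fibers (hYnint t n hn) hn,
      ThompsonAux.integral_eq_tsum_fibers (hfint n hn) hn]
    refine tsum_congr fun a => ?_
    have hsing : MeasurableSet[m0] (n ⁻¹' {a}) := hn (measurableSet_singleton a)
    calc ∫ ω in n ⁻¹' {a}, Y (n ω) t ω ∂μ
        = ∫ ω in n ⁻¹' {a}, Y a t ω ∂μ := by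
          refine setIntegral_congr_fun hsing fun ω hω => ?_
          have : n ω = a := hω
          rw [this]
      _ = ∫ ω in n ⁻¹' {a}, (μ[Y a t | m' t]) ω ∂μ :=
          (setIntegral_condExp (hm' t) (hYint' a t) (hnm a)).symm
      _ = ∫ ω in n ⁻¹' {a}, f (θstar ω) a ∂μ := by
          refine setIntegral_congr_ae hsing ?_
          filter_upwards [hmean a t] with ω hω _
          exact hω
      _ = ∫ ω in n ⁻¹' {a}, f (θstar ω) (n ω) ∂μ := by
          refine setIntegral_congr_fun hsing fun ω hω => ?_
          have : n ω = a := hω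
          rw [this]
  -- rewrite of the regret terms
  have hregret_term : ∀ t : ℕ, ∫ ω, (Y (Astar (θstar ω)) t ω - Y (A t ω) t ω) ∂μ
      = ∫ ω, (f (θstar ω) (Astar (θstar ω)) - f (θstar ω) (A t ω)) ∂μ := by
    intro t
    rw [integral_sub (hYnint t _ hAstar') (hYnint t _ (hA' t)),
      integral_sub (hfint _ hAstar') (hfint _ (hA' t)),
      hswap t _ hAstar' (hTpre t), hswap t _ (hA' t) (hApre t)]
  -- the per-action analysis
  set X : ℕ → Ω → ℝ :=
    fun a => Set.indicator ((fun ω => Astar (θstar ω)) ⁻¹' {a}) (fun _ => (1 : ℝ)) with hX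
  set p : ℕ → Ω → ℝ := fun a => μ[X a | ⨆ t, ℋ t] with hp
  have hXmeas : ∀ a, Measurable[m0] (X a) :=
    fun a => measurable_const.indicator (hAstar' (measurableSet_singleton a))
  have hXint : ∀ a, Integrable (X a) μ := by
    intro a
    refine Integrable.mono' (integrable_const 1) (hXmeas a).aestronglyMeasurable
      (ae_of_all _ fun ω => ?_)
    by_cases h : ω ∈ (fun ω => Astar (θstar ω)) ⁻¹' {a} <;>
      simp [hX, Set.indicator_apply, h]
  have hp01 : ∀ a : ℕ, ∀ᵐ ω ∂μ, 0 ≤ p a ω := by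
    intro a
    refine condExp_nonneg (ae_of_all _ fun ω => ?_)
    by_cases h : ω ∈ (fun ω => Astar (θstar ω)) ⁻¹' {a} <;>
      simp [hX, Set.indicator_apply, h]
  -- the asymptotic orthogonality relation
  have hzero : ∀ a : ℕ, (fun ω =>
      (μ[fun ω' => f (θstar ω') (Astar (θstar ω')) - f (θstar ω') a | ⨆ t, ℋ t]) ω * p a ω)
      =ᵐ[μ] 0 := by
    intro a
    set D : Ω → ℝ := fun ω => f (θstar ω) (Astar (θstar ω)) - f (θstar ω) a with hDdef
    have hDint : Integrable D μ := (hfint _ hAstar').sub (hfint (fun _ => a) measurable_const)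
    have hDnn : ∀ ω, 0 ≤ D ω := fun ω => sub_nonneg.2 (hopt _ a)
    set gl : Ω → ℝ := μ[D | ⨆ t, ℋ t] with hgl
    -- conditional independence, extended to `D`
    have hCIa : ∀ t : ℕ, μ[fun ω => D ω * Set.indicator (A t ⁻¹' {a}) (fun _ => (1:ℝ)) ω | ℋ t]
        =ᵐ[μ] fun ω => (μ[D | ℋ t]) ω
            * (μ[Set.indicator (A t ⁻¹' {a}) (fun _ => (1:ℝ)) | ℋ t]) ω := by
      intro t
      have := ThompsonAux.condexp_comp_mul_indicator (μ := μ) (ℋ.le t) hθ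
        ((hA' t) (measurableSet_singleton a))
        (φ := fun ϑ => f ϑ (Astar ϑ) - f ϑ a) ?_
        (((hfap.comp (measurable_id.prodMk hAstarmeas)).sub (hf a)).aestronglyMeasurable) hDint
      · exact this
      · intro S hS
        have h := hCI t S a hS
        have hiprod : Set.indicator (θstar ⁻¹' S ∩ A t ⁻¹' {a}) (fun _ => (1:ℝ))
            = fun ω => Set.indicator (θstar ⁻¹' S) (fun _ => (1:ℝ)) ω
                * Set.indicator (A t ⁻¹' {a}) (fun _ => (1:ℝ)) ω := by
          funext ω
          by_cases h1 : ω ∈ θstar ⁻¹' S <;> by_cases h2 : ω ∈ A t ⁻¹' {a} <;>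
            simp [Set.indicator_apply, h1, h2, Set.mem_inter_iff]
        rwa [hiprod] at h
    -- integrability of the products
    have hDe_int : ∀ t : ℕ,
        Integrable (fun ω => D ω * Set.indicator (A t ⁻¹' {a}) (fun _ => (1:ℝ)) ω) μ := by
      intro t
      refine Integrable.mono' hDint.abs
        ((hDint.aestronglyMeasurable).mul
          ((measurable_const.indicator ((hA' t) (measurableSet_singleton a))).aestronglyMeasurable))
        (ae_of_all _ fun ω => ?_)
      rw [Real.norm_eq_abs, abs_mul]
      by_cases h : ω ∈ A t ⁻¹' {a} <;> simp [Set.indicator_apply, h, abs_nonneg]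
    have hpbdd : ∀ᵐ ω ∂μ, ∀ t : ℕ, |(μ[X a | ℋ t]) ω| ≤ 1 := by
      rw [ae_all_iff]
      intro t
      have : ∀ᵐ ω ∂μ, |X a ω| ≤ ((1 : ℝ≥0) : ℝ) := by
        refine ae_of_all _ fun ω => ?_
        by_cases h : ω ∈ (fun ω => Astar (θstar ω)) ⁻¹' {a} <;>
          simp [hX, Set.indicator_apply, h]
      have := ae_bdd_condExp_of_ae_bdd (m := ℋ t) this
      simpa using this
    have hplbdd : ∀ᵐ ω ∂μ, |p a ω| ≤ 1 := by
      have : ∀ᵐ ω ∂μ, |X a ω| ≤ ((1 : ℝ≥0) : ℝ) := by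
        refine ae_of_all _ fun ω => ?_
        by_cases h : ω ∈ (fun ω => Astar (θstar ω)) ⁻¹' {a} <;>
          simp [hX, Set.indicator_apply, h]
      have := ae_bdd_condExp_of_ae_bdd (m := ⨆ t, ℋ t) this
      simpa [hp] using this
    -- the sequence of expected products
    set c : ℕ → ℝ := fun t => ∫ ω, (μ[D | ℋ t]) ω * (μ[X a | ℋ t]) ω ∂μ with hc
    have hprod_int : ∀ t : ℕ, Integrable (fun ω => (μ[D | ℋ t]) ω * (μ[X a | ℋ t]) ω) μ := by
      intro t
      have h1 : Integrable (fun ω => (μ[X a | ℋ t]) ω * (μ[D | ℋ t]) ω) μ := by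
        refine Integrable.bdd_mul (c := 1) integrable_condExp
          ((stronglyMeasurable_condExp.mono (ℋ.le t)).aestronglyMeasurable) ?_
        filter_upwards [hpbdd] with ω hω
        simpa [Real.norm_eq_abs] using hω t
      have : (fun ω => (μ[D | ℋ t]) ω * (μ[X a | ℋ t]) ω)
          = fun ω => (μ[X a | ℋ t]) ω * (μ[D | ℋ t]) ω := by
        funext ω; ring
      rw [this]
      exact h1
    have hgP_int : Integrable (fun ω => gl ω * p a ω) μ := by
      have h1 : Integrable (fun ω => p a ω * gl ω) μ := by
        refine Integrable.bdd_mul (c := 1) integrable_condExp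
          ((stronglyMeasurable_condExp.mono hmtop).aestronglyMeasurable) ?_
        filter_upwards [hplbdd] with ω hω
        simpa [Real.norm_eq_abs] using hω
      have : (fun ω => gl ω * p a ω) = fun ω => p a ω * gl ω := by funext ω; ring
      rw [this]
      exact h1
    -- `c t = ∫ D · 1_{A t = a}`
    have hct : ∀ t : ℕ,
        c t = ∫ ω, D ω * Set.indicator (A t ⁻¹' {a}) (fun _ => (1:ℝ)) ω ∂μ := by
      intro t
      rw [hc]
      rw [← integral_condExp (μ := μ)
        (f := fun ω => D ω * Set.indicator (A t ⁻¹' {a}) (fun _ => (1:ℝ)) ω) (ℋ.le t)]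
      refine integral_congr_ae ?_
      refine EventuallyEq.symm ((hCIa t).trans ?_)
      filter_upwards [hTS t {a}] with ω hω
      rw [hω]
    -- `0 ≤ c t ≤` regret term
    have hc_nonneg : ∀ t : ℕ, 0 ≤ c t := by
      intro t
      rw [hct t]
      refine integral_nonneg fun ω => ?_
      by_cases h : ω ∈ A t ⁻¹' {a} <;>
        simp [Set.indicator_apply, h, hDnn ω]
    have hc_le : ∀ t : ℕ,
        c t ≤ ∫ ω, (Y (Astar (θstar ω)) t ω - Y (A t ω) t ω) ∂μ := by
      intro t
      rw [hct t, hregret_term t]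
      refine integral_mono (hDe_int t)
        ((hfint _ hAstar').sub (hfint _ (hA' t))) fun ω => ?_
      by_cases h : ω ∈ A t ⁻¹' {a}
      · have : A t ω = a := h
        simp only [Set.indicator_apply, h, if_pos, hDdef]
        rw [this]
        simp
      · simp only [Set.indicator_apply, h, if_neg, mul_zero, ite_false]
        have := hopt (θstar ω) (A t ω)
        linarith
    -- convergence of `c` to `∫ gl * p a`
    have intB : ∀ t : ℕ,
        Integrable (fun ω => |gl ω| * |(μ[X a | ℋ t]) ω - p a ω|) μ := by
      intro t
      have h1 : Integrable (fun ω => |(μ[X a | ℋ t]) ω - p a ω| * |gl ω|) μ := by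
        refine Integrable.bdd_mul (c := 2) integrable_condExp.abs
          ((((stronglyMeasurable_condExp.mono (ℋ.le t)).measurable.sub
            (stronglyMeasurable_condExp.mono hmtop).measurable).abs).aestronglyMeasurable) ?_
        filter_upwards [hpbdd, hplbdd] with ω h1' h2'
        rw [Real.norm_eq_abs, abs_abs]
        calc |(μ[X a | ℋ t]) ω - p a ω| ≤ |(μ[X a | ℋ t]) ω| + |p a ω| := abs_sub _ _
          _ ≤ 1 + 1 := add_le_add (h1' t) h2'
          _ = 2 := by norm_num
      have : (fun ω => |gl ω| * |(μ[X a | ℋ t]) ω - p a ω|)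
          = fun ω => |(μ[X a | ℋ t]) ω - p a ω| * |gl ω| := by funext ω; ring
      rw [this]
      exact h1
    have hclim : Tendsto c atTop (𝓝 (∫ ω, gl ω * p a ω ∂μ)) := by
      rw [tendsto_iff_norm_sub_tendsto_zero]
      have hAt : Tendsto (fun t : ℕ => ∫ ω, |(μ[D | ℋ t]) ω - gl ω| ∂μ) atTop (𝓝 0) := by
        have hL1 := tendsto_eLpNorm_condExp (μ := μ) (ℱ := ℋ) D
        have heq : (fun t : ℕ => ∫ ω, |(μ[D | ℋ t]) ω - gl ω| ∂μ)
            = fun t => (eLpNorm (μ[D | ℋ t] - μ[D | ⨆ t, ℋ t]) 1 μ).toReal := by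
          funext t
          have hi : AEStronglyMeasurable (μ[D | ℋ t] - μ[D | ⨆ t, ℋ t]) μ :=
            ((stronglyMeasurable_condExp.mono (ℋ.le t)).aestronglyMeasurable).sub
              ((stronglyMeasurable_condExp.mono hmtop).aestronglyMeasurable)
          rw [eLpNorm_one_eq_lintegral_enorm, ← integral_norm_eq_lintegral_enorm hi]
          simp only [Pi.sub_apply, Real.norm_eq_abs, hgl]
        rw [heq]
        have h0 : Tendsto ENNReal.toReal (𝓝 0) (𝓝 0) := by
          simpa using ENNReal.tendsto_toReal (a := 0) (by simp)
        exact h0.comp hL1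
      have hBt : Tendsto (fun t : ℕ => ∫ ω, |gl ω| * |(μ[X a | ℋ t]) ω - p a ω| ∂μ)
          atTop (𝓝 0) := by
        have hlevy := tendsto_ae_condExp (μ := μ) (ℱ := ℋ) (X a)
        have hDCT := tendsto_integral_of_dominated_convergence (μ := μ)
          (F := fun t ω => |gl ω| * |(μ[X a | ℋ t]) ω - p a ω|) (f := fun _ => (0:ℝ))
          (bound := fun ω => |gl ω| * 2)
          (fun t => (intB t).aestronglyMeasurable)
          (integrable_condExp.abs.mul_const 2)
          (fun t => by
            filter_upwards [hpbdd, hplbdd] with ω h1' h2'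
            rw [Real.norm_eq_abs, abs_mul, abs_abs, abs_abs]
            refine mul_le_mul_of_nonneg_left ?_ (abs_nonneg _)
            calc |(μ[X a | ℋ t]) ω - p a ω| ≤ |(μ[X a | ℋ t]) ω| + |p a ω| := abs_sub _ _
              _ ≤ 1 + 1 := add_le_add (h1' t) h2'
              _ = 2 := by norm_num)
          (by
            filter_upwards [hlevy] with ω hω
            have h1 : Tendsto (fun t => (μ[X a | ℋ t]) ω - p a ω) atTop (𝓝 0) := by
              have := hω.sub (tendsto_const_nhds (x := p a ω))
              simpa [hp] using this
            have h2 : Tendsto (fun t => |gl ω| * |(μ[X a | ℋ t]) ω - p a ω|)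
                atTop (𝓝 (|gl ω| * |(0:ℝ)|)) := (h1.abs).const_mul _
            simpa using h2)
        simpa using hDCT
      refine squeeze_zero (fun t => norm_nonneg _) (fun t => ?_)
        (by simpa using hAt.add hBt)
      have h1 : c t - ∫ ω, gl ω * p a ω ∂μ
          = ∫ ω, ((μ[D | ℋ t]) ω * (μ[X a | ℋ t]) ω - gl ω * p a ω) ∂μ :=
        (integral_sub (hprod_int t) hgP_int).symm
      rw [Real.norm_eq_abs, h1]
      calc |∫ ω, ((μ[D | ℋ t]) ω * (μ[X a | ℋ t]) ω - gl ω * p a ω) ∂μ|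
          ≤ ∫ ω, |((μ[D | ℋ t]) ω * (μ[X a | ℋ t]) ω - gl ω * p a ω)| ∂μ := by
            simpa [Real.norm_eq_abs] using norm_integral_le_integral_norm
              (μ := μ) (fun ω => ((μ[D | ℋ t]) ω * (μ[X a | ℋ t]) ω - gl ω * p a ω))
        _ ≤ ∫ ω, (|(μ[D | ℋ t]) ω - gl ω| + |gl ω| * |(μ[X a | ℋ t]) ω - p a ω|) ∂μ := by
            refine integral_mono_ae ((hprod_int t).sub hgP_int).abs
              (((integrable_condExp.sub integrable_condExp).abs).add (intB t)) ?_
            filter_upwards [hpbdd] with ω hω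
            have key : (μ[D | ℋ t]) ω * (μ[X a | ℋ t]) ω - gl ω * p a ω
                = ((μ[D | ℋ t]) ω - gl ω) * (μ[X a | ℋ t]) ω
                  + gl ω * ((μ[X a | ℋ t]) ω - p a ω) := by ring
            rw [key]
            calc |((μ[D | ℋ t]) ω - gl ω) * (μ[X a | ℋ t]) ω
                  + gl ω * ((μ[X a | ℋ t]) ω - p a ω)|
                ≤ |((μ[D | ℋ t]) ω - gl ω) * (μ[X a | ℋ t]) ω|
                  + |gl ω * ((μ[X a | ℋ t]) ω - p a ω)| := abs_add_le _ _
              _ ≤ |(μ[D | ℋ t]) ω - gl ω| + |gl ω| * |(μ[X a | ℋ t]) ω - p a ω| := by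
                  rw [abs_mul, abs_mul]
                  refine add_le_add ?_ le_rfl
                  calc |(μ[D | ℋ t]) ω - gl ω| * |(μ[X a | ℋ t]) ω|
                      ≤ |(μ[D | ℋ t]) ω - gl ω| * 1 :=
                        mul_le_mul_of_nonneg_left (hω t) (abs_nonneg _)
                    _ = _ := mul_one _
        _ = (∫ ω, |(μ[D | ℋ t]) ω - gl ω| ∂μ)
              + ∫ ω, |gl ω| * |(μ[X a | ℋ t]) ω - p a ω| ∂μ :=
            integral_add ((integrable_condExp.sub integrable_condExp).abs) (intB t)
    -- Cesàro argument
    have havg : Tendsto (fun T : ℕ => (1 / (T : ℝ)) * ∑ t ∈ Finset.range T, c t)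
        atTop (𝓝 0) := by
      refine tendsto_of_tendsto_of_tendsto_of_le_of_le tendsto_const_nhds hregret
        (fun T => ?_) (fun T => ?_)
      · exact mul_nonneg (by positivity) (Finset.sum_nonneg fun t _ => hc_nonneg t)
      · refine mul_le_mul_of_nonneg_left (Finset.sum_le_sum fun t _ => hc_le t) ?_
        positivity
    have hces : Tendsto (fun T : ℕ => (1 / (T : ℝ)) * ∑ t ∈ Finset.range T, c t)
        atTop (𝓝 (∫ ω, gl ω * p a ω ∂μ)) := by
      refine hclim.cesaro.congr fun T => ?_
      simp [smul_eq_mul, one_div]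
    have hint0 : ∫ ω, gl ω * p a ω ∂μ = 0 := tendsto_nhds_unique hces havg
    have hnn : 0 ≤ᵐ[μ] fun ω => gl ω * p a ω := by
      have h1 : 0 ≤ᵐ[μ] gl := condExp_nonneg (ae_of_all _ hDnn)
      filter_upwards [h1, hp01 a] with ω h1' h2'
      exact mul_nonneg h1' h2'
    have := (integral_eq_zero_iff_of_nonneg_ae hnn hgP_int).mp hint0
    exact this
  -- consequence: a.e. on `{p a ≠ 0}`, the optimal action is ≤ a
  have hle : ∀ a : ℕ, ∀ᵐ ω ∂μ, p a ω ≠ 0 → Astar (θstar ω) ≤ a := by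
    intro a
    have h0 := hzero a
    set D : Ω → ℝ := fun ω => f (θstar ω) (Astar (θstar ω)) - f (θstar ω) a with hDdef
    have hDint : Integrable D μ := (hfint _ hAstar').sub (hfint (fun _ => a) measurable_const)
    have hDnn : ∀ ω, 0 ≤ D ω := fun ω => sub_nonneg.2 (hopt _ a)
    set gl : Ω → ℝ := μ[D | ⨆ t, ℋ t] with hgl
    set S : Set Ω := {ω | p a ω ≠ 0} with hSdef
    have hSm : MeasurableSet[⨆ t, ℋ t] S := by
      have := (stronglyMeasurable_condExp (μ := μ) (f := X a) (m := ⨆ t, ℋ t)).measurable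
      exact this (measurableSet_singleton 0).compl
    have hSm0 : MeasurableSet[m0] S := hmtop _ hSm
    have hglS : ∀ᵐ ω ∂μ, ω ∈ S → gl ω = 0 := by
      filter_upwards [h0] with ω hω hmem
      have hne : p a ω ≠ 0 := hmem
      have : gl ω * p a ω = 0 := hω
      rcases mul_eq_zero.mp this with h | h
      · exact h
      · exact absurd h hne
    have hDS0 : ∫ ω in S, D ω ∂μ = 0 := by
      rw [← setIntegral_condExp hmtop hDint hSm]
      calc ∫ ω in S, (μ[D | ⨆ t, ℋ t]) ω ∂μ = ∫ ω in S, (0:ℝ) ∂μ :=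
            setIntegral_congr_ae hSm0 (by
              filter_upwards [hglS] with ω h1 h2
              exact h1 h2)
        _ = 0 := by simp
    have hDSae : ∀ᵐ ω ∂μ, ω ∈ S → D ω = 0 := by
      have hres : D =ᵐ[μ.restrict S] 0 :=
        (integral_eq_zero_iff_of_nonneg_ae (ae_of_all _ hDnn) hDint.integrableOn
          |>.mp hDS0 : _)
      exact (ae_restrict_iff' hSm0).mp hres
    filter_upwards [hDSae] with ω h hne
    have hmem : ω ∈ S := hne
    have hD0 : D ω = 0 := h hmem
    refine hmin (θstar ω) a fun b => ?_
    have : f (θstar ω) a = f (θstar ω) (Astar (θstar ω)) := by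
      have := hD0
      simp only [hDdef] at this
      linarith
    rw [this]
    exact hopt _ b
  -- product identity from conditioning
  have hprod : ∀ a : ℕ, ∀ᵐ ω ∂μ,
      p a ω * (1 - ∑ b ∈ Finset.range (a + 1), p b ω) = 0 := by
    intro a
    have hXval : ∀ b (ω : Ω), X b ω = if Astar (θstar ω) = b then (1:ℝ) else 0 := by
      intro b ω
      by_cases h : Astar (θstar ω) = b <;>
        simp [hX, Set.indicator_apply, h]
    have hsum1 : ∀ᵐ ω ∂μ,
        p a ω * (1 - ∑ b ∈ Finset.range (a + 1), X b ω) = 0 := by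
      filter_upwards [hle a] with ω h
      by_cases hpa : p a ω = 0
      · simp [hpa]
      · have hT := h hpa
        have hsum : ∑ b ∈ Finset.range (a + 1), X b ω = 1 := by
          simp only [hXval]
          rw [Finset.sum_ite_eq (Finset.range (a + 1)) (Astar (θstar ω)) (fun _ => (1:ℝ))]
          simp [Nat.lt_succ_iff, hT]
        rw [hsum]
        simp
    set W : Ω → ℝ := fun ω => 1 - ∑ b ∈ Finset.range (a + 1), X b ω with hW
    have hWint : Integrable W μ := by
      have : Integrable (fun ω => ∑ b ∈ Finset.range (a + 1), X b ω) μ :=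
        integrable_finset_sum _ fun b _ => hXint b
      exact (integrable_const 1).sub this
    have hpaW_int : Integrable (fun ω => p a ω * W ω) μ := by
      refine Integrable.bdd_mul (c := 1) hWint
        ((stronglyMeasurable_condExp.mono hmtop).aestronglyMeasurable) ?_
      have : ∀ᵐ ω ∂μ, |X a ω| ≤ ((1 : ℝ≥0) : ℝ) := by
        refine ae_of_all _ fun ω => ?_
        rw [hXval]
        by_cases h : Astar (θstar ω) = a <;> simp [h]
      have := ae_bdd_condExp_of_ae_bdd (m := ⨆ t, ℋ t) this
      filter_upwards [this] with ω hω
      simpa [Real.norm_eq_abs, hp] using hω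
    have hpull : μ[fun ω => p a ω * W ω | ⨆ t, ℋ t] =ᵐ[μ] fun ω => p a ω * (μ[W | ⨆ t, ℋ t]) ω := by
      have h := condExp_mul_of_stronglyMeasurable_left (μ := μ) (m := ⨆ t, ℋ t)
        (f := p a) (g := W) stronglyMeasurable_condExp (by
          have : p a * W = fun ω => p a ω * W ω := rfl
          rw [this]; exact hpaW_int) hWint
      exact h
    have hlhs : μ[fun ω => p a ω * W ω | ⨆ t, ℋ t] =ᵐ[μ] 0 := by
      have h0' : μ[(0 : Ω → ℝ) | ⨆ t, ℋ t] = 0 := condExp_zero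
      refine EventuallyEq.trans
        (condExp_congr_ae (m := ⨆ t, ℋ t) (g := (0 : Ω → ℝ)) hsum1) ?_
      rw [h0']
    have hWcond : μ[W | ⨆ t, ℋ t] =ᵐ[μ] fun ω => 1 - ∑ b ∈ Finset.range (a + 1), p b ω := by
      have hWrw : W = (fun _ => (1:ℝ)) - ∑ b ∈ Finset.range (a + 1), X b := by
        funext ω
        simp [hW, Finset.sum_apply]
      have hsumint : Integrable (∑ b ∈ Finset.range (a + 1), X b) μ :=
        integrable_finset_sum' _ fun b _ => hXint b
      have hsub := condExp_sub (μ := μ) (m := ⨆ t, ℋ t) (integrable_const (1:ℝ)) hsumint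
      have hsum := condExp_finset_sum (μ := μ) (m := ⨆ t, ℋ t)
        (s := Finset.range (a + 1)) (f := fun b => X b) (fun b _ => hXint b)
      rw [hWrw]
      filter_upwards [hsub, hsum] with ω h1 h3
      rw [h1]
      simp only [Pi.sub_apply]
      rw [congrFun (condExp_const (μ := μ) hmtop (1:ℝ)) ω, h3]
      simp only [Finset.sum_apply]
      rfl
    filter_upwards [hpull.symm.trans hlhs, hWcond] with ω h1 h2
    have : p a ω * (μ[W | ⨆ t, ℋ t]) ω = 0 := h1
    rw [h2] at this
    exact this
  -- the key induction
  have hXval : ∀ b (ω : Ω), X b ω = if Astar (θstar ω) = b then (1:ℝ) else 0 := by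
    intro b ω
    by_cases h : Astar (θstar ω) = b <;>
      simp [hX, Set.indicator_apply, h]
  have hkey : ∀ a : ℕ, p a =ᵐ[μ] X a := by
    intro a
    induction a using Nat.strong_induction_on with
    | _ a IH =>
    have hIHae : ∀ᵐ ω ∂μ, ∀ b, b < a → p b ω = X b ω := by
      rw [ae_all_iff]
      intro b
      by_cases hb : b < a
      · filter_upwards [IH b hb] with ω h _
        exact h
      · exact ae_of_all _ fun ω h => absurd h hb
    have hmain : ∀ᵐ ω ∂μ, p a ω ≤ X a ω := by
      filter_upwards [hIHae, hle a, hprod a, hp01 a] with ω hIH' hle' hprod' hp0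
      by_cases hpa : p a ω = 0
      · rw [hpa, hXval]
        by_cases h : Astar (θstar ω) = a <;> simp [h]
      · have hT : Astar (θstar ω) ≤ a := hle' hpa
        have hsum : ∑ b ∈ Finset.range (a + 1), p b ω = 1 := by
          rcases mul_eq_zero.mp hprod' with h | h
          · exact absurd h hpa
          · linarith
        rcases lt_or_eq_of_le hT with hlt | heq
        · exfalso
          have hsum2 : ∑ b ∈ Finset.range (a + 1), p b ω
              = (∑ b ∈ Finset.range a, p b ω) + p a ω := Finset.sum_range_succ _ a
          have hsumX : ∑ b ∈ Finset.range a, p b ω = ∑ b ∈ Finset.range a, X b ω :=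
            Finset.sum_congr rfl fun b hb => hIH' b (Finset.mem_range.mp hb)
          have hXsum : ∑ b ∈ Finset.range a, X b ω = 1 := by
            simp only [hXval]
            rw [Finset.sum_ite_eq (Finset.range a) (Astar (θstar ω)) (fun _ => (1:ℝ))]
            simp [hlt]
          rw [hsum2, hsumX, hXsum] at hsum
          exact hpa (by linarith)
        · have hXa : X a ω = 1 := by rw [hXval]; simp [heq]
          have hXb0 : ∀ b, b < a → X b ω = 0 := by
            intro b hb
            rw [hXval, if_neg (by rw [heq]; omega)]
          have hzero' : ∑ b ∈ Finset.range a, p b ω = 0 := by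
            rw [Finset.sum_congr rfl fun b hb => hIH' b (Finset.mem_range.mp hb)]
            exact Finset.sum_eq_zero fun b hb => hXb0 b (Finset.mem_range.mp hb)
          rw [Finset.sum_range_succ, hzero'] at hsum
          rw [hXa]
          linarith
    have h2 : ∫ ω, p a ω ∂μ = ∫ ω, X a ω ∂μ := integral_condExp hmtop
    have hint_eq : ∫ ω, (X a ω - p a ω) ∂μ = 0 := by
      rw [integral_sub (hXint a) integrable_condExp, h2, sub_self]
    have hfin := (integral_eq_zero_iff_of_nonneg_ae
      (hmain.mono fun ω h => sub_nonneg.2 h)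
      ((hXint a).sub integrable_condExp)).mp hint_eq
    filter_upwards [hfin] with ω h
    have h' : X a ω - p a ω = 0 := h
    linarith
  -- conclusion
  have hBmeas : MeasurableSet B := (Set.to_countable B).measurableSet
  have hXBmeas : Measurable[m0]
      (Set.indicator ((fun ω => Astar (θstar ω)) ⁻¹' B) (fun _ => (1:ℝ))) :=
    measurable_const.indicator (hAstar' hBmeas)
  have hXBint : Integrable
      (Set.indicator ((fun ω => Astar (θstar ω)) ⁻¹' B) (fun _ => (1:ℝ))) μ := by
    refine Integrable.mono' (integrable_const 1) hXBmeas.aestronglyMeasurable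
      (ae_of_all _ fun ω => ?_)
    by_cases h : ω ∈ (fun ω => Astar (θstar ω)) ⁻¹' B <;>
      simp [Set.indicator_apply, h]
  set PB : Ω → ℝ :=
    μ[Set.indicator ((fun ω => Astar (θstar ω)) ⁻¹' B) (fun _ => (1:ℝ)) | ⨆ t, ℋ t] with hPB
  have hmono : ∀ a : ℕ, ∀ᵐ ω ∂μ, a ∈ B → p a ω ≤ PB ω := by
    intro a
    by_cases ha : a ∈ B
    · have := condExp_mono (μ := μ) (m := ⨆ t, ℋ t) (hXint a) hXBint
        (ae_of_all _ fun ω => by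
          rw [hXval]
          by_cases h : Astar (θstar ω) = a
          · rw [if_pos h]
            have hmem : ω ∈ (fun ω => Astar (θstar ω)) ⁻¹' B := by
              simp only [Set.mem_preimage, h]; exact ha
            simp [Set.indicator_apply, hmem]
          · rw [if_neg h]
            by_cases hmem : ω ∈ (fun ω => Astar (θstar ω)) ⁻¹' B <;>
              simp [Set.indicator_apply, hmem])
      filter_upwards [this] with ω h _
      exact h
    · exact ae_of_all _ fun ω h => absurd h ha
  have hmono_all : ∀ᵐ ω ∂μ, ∀ a : ℕ, a ∈ B → p a ω ≤ PB ω := by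
    rw [ae_all_iff]; exact hmono
  have hkey_all : ∀ᵐ ω ∂μ, ∀ a : ℕ, p a ω = X a ω := by
    rw [ae_all_iff]; exact hkey
  have hPBnn : ∀ᵐ ω ∂μ, 0 ≤ PB ω := by
    refine condExp_nonneg (ae_of_all _ fun ω => ?_)
    by_cases h : ω ∈ (fun ω => Astar (θstar ω)) ⁻¹' B <;>
      simp [Set.indicator_apply, h]
  have hge : ∀ᵐ ω ∂μ,
      Set.indicator ((fun ω => Astar (θstar ω)) ⁻¹' B) (fun _ => (1:ℝ)) ω ≤ PB ω := by
    filter_upwards [hmono_all, hkey_all, hPBnn] with ω h1 h2 h3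
    by_cases hTB : Astar (θstar ω) ∈ B
    · have hXa : X (Astar (θstar ω)) ω = 1 := by rw [hXval]; simp
      have : (1:ℝ) ≤ PB ω := by
        have := h1 (Astar (θstar ω)) hTB
        rw [h2 (Astar (θstar ω)), hXa] at this
        exact this
      have hmem : ω ∈ (fun ω => Astar (θstar ω)) ⁻¹' B := hTB
      simpa [Set.indicator_apply, hmem] using this
    · have hmem : ω ∉ (fun ω => Astar (θstar ω)) ⁻¹' B := hTB
      simpa [Set.indicator_apply, hmem] using h3
  have h2 : ∫ ω, PB ω ∂μ
      = ∫ ω, Set.indicator ((fun ω => Astar (θstar ω)) ⁻¹' B) (fun _ => (1:ℝ)) ω ∂μ :=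
    integral_condExp hmtop
  have hint_eq : ∫ ω, (PB ω
      - Set.indicator ((fun ω => Astar (θstar ω)) ⁻¹' B) (fun _ => (1:ℝ)) ω) ∂μ = 0 := by
    rw [integral_sub integrable_condExp hXBint, h2, sub_self]
  have hfin := (integral_eq_zero_iff_of_nonneg_ae
    (hge.mono fun ω h => sub_nonneg.2 h)
    (integrable_condExp.sub hXBint)).mp hint_eq
  filter_upwards [hfin] with ω h
  have h' : PB ω - Set.indicator ((fun ω => Astar (θstar ω)) ⁻¹' B) (fun _ => (1:ℝ)) ω = 0 := h
  have : PB ω = Set.indicator ((fun ω => Astar (θstar ω)) ⁻¹' B) (fun _ => (1:ℝ)) ω := by linarith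
  exact this
end

section
/- Let regret contributions r_t ≥ 0 and suppose a policy π¹ has cumulative regret ∑_{t=1}^T r_t^{(1)} ≤ C√T for all T. Define policy π² which at times t = i² (i ∈ ℤ⁺) incurs regret at most a constant Δ > 0 (playing a fixed action) and at all other times plays π¹ steps in order. Then the cumulative regret of π² over horizon T is at most C√T + Δ⌊√T⌋ = O(√T), yet π² plays the fixed action infinitely often. -/
open Filter

/-- The paper's counterexample: interleaving a fixed action (with per-step regret at most `Δ`)
at the perfect-square time steps with a policy `π¹` of cumulative regret `≤ C√T` (played in order
at the non-square time steps) yields a policy `π²` whose cumulative regret over horizon `T` is at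
most `C√T + Δ⌊√T⌋ = O(√T)`, while the fixed action is played infinitely often (the set of
perfect-square times is infinite).  Here `r1 k` is the regret of the `(k+1)`-th step of `π¹`,
`r2 t` is the regret of `π²` at time `t ≥ 1`, and `s` enumerates the non-square times in
increasing order. -/
theorem sublinear_regret_counterexample
    (C Δ : ℝ) (hC : 0 ≤ C) (hΔ : 0 < Δ)
    (r1 r2 : ℕ → ℝ) (hr1nonneg : ∀ k, 0 ≤ r1 k) (hr2nonneg : ∀ t, 0 ≤ r2 t)
    (hr1 : ∀ T : ℕ, ∑ k ∈ Finset.range T, r1 k ≤ C * Real.sqrt T)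
    (s : ℕ → ℕ) (hs : StrictMono s)
    (hsrange : Set.range s = {t : ℕ | 1 ≤ t ∧ ¬∃ i : ℕ, 0 < i ∧ t = i ^ 2})
    (hinterleave : ∀ m : ℕ, r2 (s m) = r1 m)
    (hsquare : ∀ i : ℕ, 0 < i → r2 (i ^ 2) ≤ Δ) :
    (∀ T : ℕ, ∑ t ∈ Finset.Icc 1 T, r2 t ≤ C * Real.sqrt T + Δ * Nat.sqrt T) ∧
      {t : ℕ | ∃ i : ℕ, 0 < i ∧ t = i ^ 2}.Infinite := by
  classical
  constructor
  · intro T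
    set P : ℕ → Prop := fun t => ∃ i : ℕ, 0 < i ∧ t = i ^ 2 with hP
    have hsplit := Finset.sum_filter_add_sum_filter_not (Finset.Icc 1 T) P r2
    -- bound the square part
    have hA : ∑ t ∈ (Finset.Icc 1 T).filter P, r2 t ≤ Δ * Nat.sqrt T := by
      have hsub : (Finset.Icc 1 T).filter P ⊆
          (Finset.Icc 1 (Nat.sqrt T)).image (fun i => i ^ 2) := by
        intro t ht
        simp only [Finset.mem_filter, Finset.mem_Icc] at ht
        obtain ⟨⟨ht1, htT⟩, i, hi, rfl⟩ := ht
        refine Finset.mem_image.2 ⟨i, ?_, rfl⟩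
        simp only [Finset.mem_Icc]
        exact ⟨hi, Nat.le_sqrt'.2 htT⟩
      calc ∑ t ∈ (Finset.Icc 1 T).filter P, r2 t
          ≤ ∑ t ∈ (Finset.Icc 1 (Nat.sqrt T)).image (fun i => i ^ 2), r2 t :=
            Finset.sum_le_sum_of_subset_of_nonneg hsub (fun t _ _ => hr2nonneg t)
        _ = ∑ i ∈ Finset.Icc 1 (Nat.sqrt T), r2 (i ^ 2) := by
            rw [Finset.sum_image]
            intro a _ b _ hab
            exact Nat.pow_left_injective (by norm_num) hab
        _ ≤ ∑ i ∈ Finset.Icc 1 (Nat.sqrt T), Δ := by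
            refine Finset.sum_le_sum fun i hi => ?_
            exact hsquare i (Finset.mem_Icc.1 hi).1
        _ = Δ * Nat.sqrt T := by
            rw [Finset.sum_const, Nat.card_Icc]
            simp [mul_comm]
    -- bound the non-square part
    have hs0 : 2 ≤ s 0 := by
      have h0 : s 0 ∈ Set.range s := ⟨0, rfl⟩
      rw [hsrange] at h0
      obtain ⟨h1, h2⟩ := h0
      by_contra h
      have hs1 : s 0 = 1 := by omega
      exact h2 ⟨1, by norm_num, by omega⟩
    have hmono : ∀ m, m + 2 ≤ s m := by
      intro m
      induction m with
      | zero => simpa using hs0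
      | succ n ih =>
          have h' : s n < s (n + 1) := hs (by omega)
          omega
    have hB : ∑ t ∈ (Finset.Icc 1 T).filter (fun t => ¬ P t), r2 t ≤ C * Real.sqrt T := by
      have hsub : (Finset.Icc 1 T).filter (fun t => ¬ P t) ⊆
          (Finset.range T).image s := by
        intro t ht
        simp only [Finset.mem_filter, Finset.mem_Icc] at ht
        obtain ⟨⟨ht1, htT⟩, hnp⟩ := ht
        have : t ∈ Set.range s := by rw [hsrange]; exact ⟨ht1, hnp⟩
        obtain ⟨m, rfl⟩ := this
        refine Finset.mem_image.2 ⟨m, Finset.mem_range.2 ?_, rfl⟩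
        have := hmono m; omega
      calc ∑ t ∈ (Finset.Icc 1 T).filter (fun t => ¬ P t), r2 t
          ≤ ∑ t ∈ (Finset.range T).image s, r2 t :=
            Finset.sum_le_sum_of_subset_of_nonneg hsub (fun t _ _ => hr2nonneg t)
        _ = ∑ m ∈ Finset.range T, r2 (s m) := by
            rw [Finset.sum_image (fun a _ b _ hab => hs.injective hab)]
        _ = ∑ m ∈ Finset.range T, r1 m := by
            exact Finset.sum_congr rfl fun m _ => hinterleave m
        _ ≤ C * Real.sqrt T := hr1 T
    linarith [hsplit, hA, hB]
  · refine Set.infinite_of_injective_forall_mem (f := fun i : ℕ => (i + 1) ^ 2) ?_ ?_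
    · intro a b hab
      have := Nat.pow_left_injective (n := 2) (by norm_num) hab
      omega
    · intro i
      exact ⟨i + 1, Nat.succ_pos i, rfl⟩
end
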